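/- arXiv:1811.06189 — 5 statements merged into one kernel-verified Lean document; each statement's English description precedes it below -/
import Mathlib

section
/- Convex additivity domain lemma (Cauchy–Pexider on bounded convex domains): Let f, g, h : ℝ → ℝ be bounded functions and let E ⊆ ℝ² be an open, convex, bounded set such that f(x) + g(y) = h(x+y) for all (x,y) ∈ E. Define the projections p₁(x,y) = x, p₂(x,y) = y, p₃(x,y) = x+y. Then there exists a slope s ∈ ℝ such that f is affine with slope s on p₁(E), g is affine with slope s on p₂(E), and h is affine with slope s on p₃(E). -/
open Set

private lemma affine_coeffs_eq {s b s' b' x ε : ℝ} (hε : 0 < ε)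
    (h : ∀ y, |y - x| < ε → s * y + b = s' * y + b') : s = s' ∧ b = b' := by
  have h1 := h x (by simpa using hε)
  have h2 := h (x + ε / 2) (by
    rw [add_sub_cancel_left, abs_of_pos (by linarith)]; linarith)
  have key : (ε / 2) * s = (ε / 2) * s' := by linear_combination h2 - h1
  have hs : s = s' := mul_left_cancel₀ (by positivity) key
  exact ⟨hs, by rw [hs] at h1; linarith⟩

private lemma theta_nsmul (θ : ℝ → ℝ) (δ : ℝ) (hδ : 0 < δ)
    (hadd : ∀ u v, |u| < δ → |v| < δ → θ (u + v) = θ u + θ v) :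
    ∀ (n : ℕ) (x : ℝ), |x| * n < δ → θ ((n : ℝ) * x) = n * θ x := by
  have h0 : θ 0 = 0 := by
    have := hadd 0 0 (by simpa using hδ) (by simpa using hδ)
    simp only [add_zero] at this; linarith
  intro n
  induction n with
  | zero => intro x _; simp [h0]
  | succ n ih =>
    intro x hx
    have hxnn := abs_nonneg x
    have hxn : |x| * n < δ := by
      push_cast at hx ⊢; nlinarith
    have hx1 : |x| < δ := by push_cast at hx; nlinarith
    have hnx : |(n : ℝ) * x| < δ := by
      rw [abs_mul, abs_of_nonneg (by positivity : (0:ℝ) ≤ (n:ℝ))]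
      calc (n : ℝ) * |x| = |x| * n := by ring
        _ < δ := hxn
    have hstep := hadd ((n : ℝ) * x) x hnx hx1
    have : ((n + 1 : ℕ) : ℝ) * x = (n : ℝ) * x + x := by push_cast; ring
    rw [this, hstep, ih x hxn]
    push_cast; ring

private lemma exists_global_extension (θ : ℝ → ℝ) (δ : ℝ) (hδ : 0 < δ)
    (hadd : ∀ u v, |u| < δ → |v| < δ → θ (u + v) = θ u + θ v) :
    ∃ Θ : ℝ → ℝ, (∀ x y, Θ (x + y) = Θ x + Θ y) ∧ ∀ u, |u| < δ → Θ u = θ u := by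
  have nf := theta_nsmul θ δ hδ hadd
  -- well-definedness
  have wd : ∀ (n m : ℕ) (x : ℝ), 0 < n → 0 < m → |x| < n * δ → |x| < m * δ →
      (n : ℝ) * θ (x / n) = (m : ℝ) * θ (x / m) := by
    intro n m x hn hm hxn hxm
    have hn' : (0:ℝ) < n := by exact_mod_cast hn
    have hm' : (0:ℝ) < m := by exact_mod_cast hm
    have e1 : θ (x / n) = m * θ (x / (n * m)) := by
      have h1 : |x / ((n:ℝ) * m)| * m < δ := by
        have hd : |x / ((n:ℝ) * m)| = |x| / ((n:ℝ) * m) := by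
          rw [abs_div, abs_of_pos (by positivity : (0:ℝ) < (n:ℝ) * m)]
        rw [hd, div_mul_eq_mul_div, div_lt_iff₀ (by positivity)]
        nlinarith [abs_nonneg x]
      have := nf m (x / (n * m)) h1
      have e : (m : ℝ) * (x / (n * m)) = x / n := by field_simp
      rwa [e] at this
    have e2 : θ (x / m) = n * θ (x / (n * m)) := by
      have h1 : |x / ((n:ℝ) * m)| * n < δ := by
        have hd : |x / ((n:ℝ) * m)| = |x| / ((n:ℝ) * m) := by
          rw [abs_div, abs_of_pos (by positivity : (0:ℝ) < (n:ℝ) * m)]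
        rw [hd, div_mul_eq_mul_div, div_lt_iff₀ (by positivity)]
        nlinarith [abs_nonneg x]
      have := nf n (x / (n * m)) h1
      have e : (n : ℝ) * (x / (n * m)) = x / m := by field_simp
      rwa [e] at this
    rw [e1, e2]; ring
  set N : ℝ → ℕ := fun x => ⌈|x| / δ⌉₊ + 1 with hN
  have hNpos : ∀ x, 0 < N x := fun x => Nat.succ_pos _
  have hNlt : ∀ x, |x| < (N x : ℝ) * δ := by
    intro x
    have h1 : |x| / δ ≤ (⌈|x| / δ⌉₊ : ℝ) := Nat.le_ceil _
    have h2 : ((⌈|x| / δ⌉₊ : ℕ) : ℝ) < (N x : ℝ) := by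
      simp [hN]
    calc |x| = (|x| / δ) * δ := by field_simp
      _ ≤ (⌈|x| / δ⌉₊ : ℝ) * δ := by nlinarith
      _ < (N x : ℝ) * δ := by nlinarith
  refine ⟨fun x => (N x : ℝ) * θ (x / N x), ?_, ?_⟩
  · intro x y
    set n : ℕ := N x + N y + N (x + y) with hn
    have hnpos : 0 < n := by positivity
    have hn' : (0:ℝ) < (n:ℝ) := by exact_mod_cast hnpos
    have hxlt : |x| < (n : ℝ) * δ := by
      refine lt_of_lt_of_le (hNlt x) ?_
      have : (N x : ℝ) ≤ (n : ℝ) := by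
        have : N x ≤ n := by omega
        exact_mod_cast this
      nlinarith
    have hylt : |y| < (n : ℝ) * δ := by
      refine lt_of_lt_of_le (hNlt y) ?_
      have : (N y : ℝ) ≤ (n : ℝ) := by
        have : N y ≤ n := by omega
        exact_mod_cast this
      nlinarith
    have hxylt : |x + y| < (n : ℝ) * δ := by
      refine lt_of_lt_of_le (hNlt (x + y)) ?_
      have : (N (x+y) : ℝ) ≤ (n : ℝ) := by
        have : N (x+y) ≤ n := by omega
        exact_mod_cast this
      nlinarith
    have ex := wd (N x) n x (hNpos x) hnpos (hNlt x) hxlt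
    have ey := wd (N y) n y (hNpos y) hnpos (hNlt y) hylt
    have exy := wd (N (x+y)) n (x+y) (hNpos (x+y)) hnpos (hNlt (x+y)) hxylt
    show (N (x+y) : ℝ) * θ ((x+y) / N (x+y)) =
      (N x : ℝ) * θ (x / N x) + (N y : ℝ) * θ (y / N y)
    rw [ex, ey, exy]
    have hsplit : (x + y) / n = x / n + y / n := by ring
    have hxs : |x / n| < δ := by
      rw [abs_div, abs_of_pos hn', div_lt_iff₀ hn']; nlinarith
    have hys : |y / n| < δ := by
      rw [abs_div, abs_of_pos hn', div_lt_iff₀ hn']; nlinarith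
    rw [hsplit, hadd _ _ hxs hys]; ring
  · intro u hu
    have := wd (N u) 1 u (hNpos u) one_pos (hNlt u) (by simpa using hu)
    simpa using this

private lemma linear_of_additive_bounded (Θ : ℝ → ℝ)
    (hadd : ∀ x y, Θ (x + y) = Θ x + Θ y) (δ M : ℝ) (hδ : 0 < δ)
    (hM : ∀ u, |u| < δ → |Θ u| ≤ M) : ∃ s : ℝ, ∀ x, Θ x = s * x := by
  set s : ℝ := Θ 1 with hs
  set Φ : ℝ →+ ℝ := AddMonoidHom.mk' (fun x => Θ x - s * x) (by
    intro a b; simp only [hadd]; ring) with hΦ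
  have hΦdef : ∀ x, Φ x = Θ x - s * x := fun x => rfl
  have hΦ1 : Φ 1 = 0 := by simp [hΦdef, hs]
  have hq : ∀ q : ℚ, Φ (q : ℝ) = 0 := by
    intro q
    have hsmul := map_ratCast_smul Φ ℝ ℝ q 1
    rw [smul_eq_mul, smul_eq_mul, mul_one, hΦ1, mul_zero] at hsmul
    exact hsmul
  refine ⟨s, fun u => ?_⟩
  have hzero : Φ u = 0 := by
    by_contra hne
    have habs : 0 < |Φ u| := abs_pos.mpr hne
    obtain ⟨n, hn⟩ := exists_nat_gt ((M + |s| * δ) / |Φ u|)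
    have hδn : 0 < δ / (n + 1 : ℕ) := by positivity
    obtain ⟨q, hq1, hq2⟩ := exists_rat_btwn (show u < u + δ / (n + 1 : ℕ) by linarith)
    set v : ℝ := u - q with hv
    have hvlt : |v| < δ / (n + 1 : ℕ) := by
      rw [abs_lt]; constructor <;> [linarith; linarith]
    have hΦuv : Φ u = Φ v := by
      have : u = v + (q : ℝ) := by ring
      rw [this, map_add, hq, add_zero]
    have hnv : Φ (((n + 1 : ℕ) : ℝ) * v) = ((n + 1 : ℕ) : ℝ) * Φ v := by
      have := map_nsmul Φ (n + 1) v
      simpa [nsmul_eq_mul] using this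
    have hnvlt : |((n + 1 : ℕ) : ℝ) * v| < δ := by
      rw [abs_mul, abs_of_pos (by positivity : (0:ℝ) < ((n+1:ℕ):ℝ))]
      have hn1 : (0:ℝ) < ((n+1:ℕ):ℝ) := by positivity
      calc ((n+1:ℕ):ℝ) * |v| < ((n+1:ℕ):ℝ) * (δ / (n+1:ℕ)) := by
            exact mul_lt_mul_of_pos_left hvlt hn1
        _ = δ := by field_simp
    have hbound : |Φ (((n + 1 : ℕ) : ℝ) * v)| ≤ M + |s| * δ := by
      rw [hΦdef]
      have h1 : |Θ (((n+1:ℕ):ℝ) * v)| ≤ M := hM _ hnvlt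
      have h2 : |s * (((n+1:ℕ):ℝ) * v)| ≤ |s| * δ := by
        rw [abs_mul]
        have := abs_nonneg s
        nlinarith [le_of_lt hnvlt, abs_nonneg (((n+1:ℕ):ℝ) * v)]
      calc |Θ (((n+1:ℕ):ℝ) * v) - s * (((n+1:ℕ):ℝ) * v)|
          ≤ |Θ (((n+1:ℕ):ℝ) * v)| + |s * (((n+1:ℕ):ℝ) * v)| := abs_sub _ _
        _ ≤ M + |s| * δ := by linarith
    rw [hnv, ← hΦuv] at hbound
    have : ((n+1:ℕ):ℝ) * |Φ u| ≤ M + |s| * δ := by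
      calc ((n+1:ℕ):ℝ) * |Φ u| = |((n+1:ℕ):ℝ) * Φ u| := by
            rw [abs_mul, abs_of_pos (show (0:ℝ) < ((n+1:ℕ):ℝ) by positivity)]
        _ ≤ M + |s| * δ := hbound
    have hlt : (M + |s| * δ) / |Φ u| < ((n+1:ℕ):ℝ) := by
      push_cast; push_cast at hn; linarith
    rw [div_lt_iff₀ habs] at hlt
    linarith
  have := hΦdef u
  rw [hzero] at this
  linarith [this.symm]

private lemma affine_of_locally_affine (θ : ℝ → ℝ) (I : Set ℝ) (hI : IsPreconnected I)
    (x₀ : ℝ) (hx₀ : x₀ ∈ I)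
    (hloc : ∀ x ∈ I, ∃ ε > 0, ∃ s b : ℝ, ∀ y, |y - x| < ε → θ y = s * y + b) :
    ∃ s b : ℝ, (∀ x ∈ I, θ x = s * x + b) ∧
      ∀ x ε, 0 < ε → (∀ y, |y - x| < ε → y ∈ I) →
        ∀ s' b' : ℝ, (∀ y, |y - x| < ε → θ y = s' * y + b') → s' = s := by
  obtain ⟨ε₀, hε₀, s, b, hrep₀⟩ := hloc x₀ hx₀
  set S : Set ℝ := {x | ∃ ε > 0, ∀ y, |y - x| < ε → θ y = s * y + b} with hS
  set V : Set ℝ := {x | ∃ ε > 0, ∃ s' b' : ℝ, ¬(s' = s ∧ b' = b) ∧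
    ∀ y, |y - x| < ε → θ y = s' * y + b'} with hV
  have hSopen : IsOpen S := by
    rw [Metric.isOpen_iff]
    rintro x ⟨ε, hε, hrep⟩
    refine ⟨ε / 2, by linarith, fun z hz => ?_⟩
    rw [Metric.mem_ball, Real.dist_eq] at hz
    exact ⟨ε / 2, by linarith, fun y hy => hrep y (by
      have : |y - x| ≤ |y - z| + |z - x| := abs_sub_le _ _ _
      linarith)⟩
  have hVopen : IsOpen V := by
    rw [Metric.isOpen_iff]
    rintro x ⟨ε, hε, s', b', hne, hrep⟩
    refine ⟨ε / 2, by linarith, fun z hz => ?_⟩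
    rw [Metric.mem_ball, Real.dist_eq] at hz
    exact ⟨ε / 2, by linarith, s', b', hne, fun y hy => hrep y (by
      have : |y - x| ≤ |y - z| + |z - x| := abs_sub_le _ _ _
      linarith)⟩
  have hdisj : Disjoint S V := by
    rw [Set.disjoint_left]
    rintro x ⟨ε₁, hε₁, hrep₁⟩ ⟨ε₂, hε₂, s', b', hne, hrep₂⟩
    refine hne ?_
    have heq : ∀ y, |y - x| < min ε₁ ε₂ → s * y + b = s' * y + b' := fun y hy => by
      rw [← hrep₁ y (lt_of_lt_of_le hy (min_le_left _ _)),
        ← hrep₂ y (lt_of_lt_of_le hy (min_le_right _ _))]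
    have := affine_coeffs_eq (x := x) (lt_min hε₁ hε₂) heq
    exact ⟨this.1.symm, this.2.symm⟩
  have hsub : I ⊆ S ∪ V := by
    intro x hx
    obtain ⟨ε, hε, s', b', hrep⟩ := hloc x hx
    by_cases hc : s' = s ∧ b' = b
    · exact Or.inl ⟨ε, hε, fun y hy => by rw [hrep y hy, hc.1, hc.2]⟩
    · exact Or.inr ⟨ε, hε, s', b', hc, hrep⟩
  have hIS : I ⊆ S :=
    hI.subset_left_of_subset_union hSopen hVopen hdisj hsub ⟨x₀, hx₀, ε₀, hε₀, hrep₀⟩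
  refine ⟨s, b, fun x hx => ?_, ?_⟩
  · obtain ⟨ε, hε, hrep⟩ := hIS hx
    exact hrep x (by simpa using hε)
  · intro x ε hε hmem s' b' hrep
    have heq : ∀ y, |y - x| < ε → s' * y + b' = s * y + b := fun y hy => by
      obtain ⟨ε', hε', hrep'⟩ := hIS (hmem y hy)
      rw [← hrep y hy, ← hrep' y (by simpa using hε')]
    exact (affine_coeffs_eq (x := x) hε heq).1

/-- Convex additivity domain lemma (Cauchy--Pexider on bounded convex
open domains). -/
theorem convex_additivity_domain_lemma
    (f g h : ℝ → ℝ)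
    (hf : ∃ M : ℝ, ∀ x, |f x| ≤ M) (hg : ∃ M : ℝ, ∀ x, |g x| ≤ M)
    (hh : ∃ M : ℝ, ∀ x, |h x| ≤ M)
    (E : Set (ℝ × ℝ)) (hEopen : IsOpen E) (hEconv : Convex ℝ E)
    (hEbdd : Bornology.IsBounded E)
    (hadd : ∀ p ∈ E, f p.1 + g p.2 = h (p.1 + p.2)) :
    ∃ s : ℝ,
      (∃ b : ℝ, ∀ x ∈ Prod.fst '' E, f x = s * x + b) ∧
      (∃ b : ℝ, ∀ y ∈ Prod.snd '' E, g y = s * y + b) ∧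
      (∃ b : ℝ, ∀ z ∈ (fun p : ℝ × ℝ => p.1 + p.2) '' E, h z = s * z + b) := by
  obtain ⟨Mh, hMh⟩ := hh
  rcases E.eq_empty_or_nonempty with rfl | ⟨p₀, hp₀⟩
  · exact ⟨0, ⟨0, by simp⟩, ⟨0, by simp⟩, ⟨0, by simp⟩⟩
  -- Local affine structure at each point of E, with a common slope for f, g, h.
  have hloc : ∀ p ∈ E, ∃ ε > 0, ∃ s : ℝ,
      (∀ u : ℝ, |u| < ε → f (p.1 + u) = f p.1 + s * u) ∧
      (∀ u : ℝ, |u| < ε → g (p.2 + u) = g p.2 + s * u) ∧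
      (∀ u : ℝ, |u| < ε → h (p.1 + p.2 + u) = h (p.1 + p.2) + s * u) ∧
      (∀ u : ℝ, |u| < ε → (p.1 + u, p.2) ∈ E) ∧
      (∀ u : ℝ, |u| < ε → (p.1, p.2 + u) ∈ E) := by
    intro p hp
    obtain ⟨ε, hε, hball⟩ := Metric.isOpen_iff.1 hEopen p hp
    have hmem : ∀ u v : ℝ, |u| < ε → |v| < ε → (p.1 + u, p.2 + v) ∈ E := by
      intro u v hu hv
      apply hball
      rw [Metric.mem_ball, Prod.dist_eq]
      have e1 : dist (p.1 + u) p.1 = |u| := by rw [Real.dist_eq, add_sub_cancel_left]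
      have e2 : dist (p.2 + v) p.2 = |v| := by rw [Real.dist_eq, add_sub_cancel_left]
      simp only [e1, e2]
      exact max_lt hu hv
    set z := p.1 + p.2 with hz
    set χ : ℝ → ℝ := fun w => h (z + w) - h z with hχ
    have hfadd : ∀ u v : ℝ, |u| < ε → |v| < ε →
        f (p.1 + u) + g (p.2 + v) = h (z + (u + v)) := by
      intro u v hu hv
      have := hadd _ (hmem u v hu hv)
      simp only at this
      rw [this, hz]; ring_nf
    have hp' : f p.1 + g p.2 = h z := by
      have := hadd p hp; rw [hz]; exact this
    have hχadd : ∀ u v : ℝ, |u| < ε / 2 → |v| < ε / 2 → χ (u + v) = χ u + χ v := by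
      intro u v hu hv
      have hu' : |u| < ε := by have := abs_nonneg v; linarith [hu]
      have hv' : |v| < ε := by linarith [hv]
      have h1 := hfadd u v hu' hv'
      have h2 := hfadd u 0 hu' (by simpa using hε)
      have h3 := hfadd 0 v (by simpa using hε) hv'
      simp only [add_zero, zero_add] at h2 h3
      simp only [hχ]
      linarith [h1, h2, h3, hp']
    obtain ⟨Θ, hΘadd, hΘeq⟩ := exists_global_extension χ (ε / 2) (by linarith) hχadd
    obtain ⟨s, hslin⟩ := linear_of_additive_bounded Θ hΘadd (ε / 2) (2 * Mh)
      (by linarith) (by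
        intro u hu
        rw [hΘeq u hu]
        simp only [hχ]
        calc |h (z + u) - h z| ≤ |h (z + u)| + |h z| := abs_sub _ _
          _ ≤ 2 * Mh := by linarith [hMh (z + u), hMh z])
    have hχlin : ∀ u : ℝ, |u| < ε / 2 → χ u = s * u := by
      intro u hu; rw [← hΘeq u hu, hslin u]
    refine ⟨ε / 2, by linarith, s, ?_, ?_, ?_, ?_, ?_⟩
    · intro u hu
      have hu' : |u| < ε := by linarith [hu]
      have h2 := hfadd u 0 hu' (by simpa using hε)
      simp only [add_zero] at h2
      have := hχlin u hu
      simp only [hχ] at this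
      linarith [h2, hp']
    · intro u hu
      have hu' : |u| < ε := by linarith [hu]
      have h3 := hfadd 0 u (by simpa using hε) hu'
      simp only [zero_add, add_zero] at h3
      have := hχlin u hu
      simp only [hχ] at this
      linarith [h3, hp']
    · intro u hu
      have := hχlin u hu
      simp only [hχ] at this
      linarith [this]
    · intro u hu
      have := hmem u 0 (by linarith [hu]) (by simpa using hε)
      simpa using this
    · intro u hu
      have := hmem 0 u (by simpa using hε) (by linarith [hu])
      simpa using this
  -- The three projected sets.
  set I₁ : Set ℝ := Prod.fst '' E with hI₁
  set I₂ : Set ℝ := Prod.snd '' E with hI₂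
  set I₃ : Set ℝ := (fun p : ℝ × ℝ => p.1 + p.2) '' E with hI₃
  have hI₁pre : IsPreconnected I₁ := by
    have : Convex ℝ I₁ := hEconv.is_linear_image ⟨fun a b => rfl, fun c a => rfl⟩
    exact this.isPreconnected
  have hI₂pre : IsPreconnected I₂ := by
    have : Convex ℝ I₂ := hEconv.is_linear_image ⟨fun a b => rfl, fun c a => rfl⟩
    exact this.isPreconnected
  have hI₃pre : IsPreconnected I₃ := by
    have : Convex ℝ I₃ := hEconv.is_linear_image
      ⟨fun a b => by simp; ring, fun c a => by simp; ring⟩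
    exact this.isPreconnected
  -- Local affine structure on each projection.
  have hloc₁ : ∀ x ∈ I₁, ∃ ε > 0, ∃ s b : ℝ, ∀ y, |y - x| < ε → f y = s * y + b := by
    rintro x ⟨p, hp, rfl⟩
    obtain ⟨ε, hε, s, hF, -, -, -, -⟩ := hloc p hp
    refine ⟨ε, hε, s, f p.1 - s * p.1, fun y hy => ?_⟩
    have := hF (y - p.1) hy
    rw [add_sub_cancel] at this
    rw [this]; ring
  have hloc₂ : ∀ x ∈ I₂, ∃ ε > 0, ∃ s b : ℝ, ∀ y, |y - x| < ε → g y = s * y + b := by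
    rintro x ⟨p, hp, rfl⟩
    obtain ⟨ε, hε, s, -, hG, -, -, -⟩ := hloc p hp
    refine ⟨ε, hε, s, g p.2 - s * p.2, fun y hy => ?_⟩
    have := hG (y - p.2) hy
    rw [add_sub_cancel] at this
    rw [this]; ring
  have hloc₃ : ∀ x ∈ I₃, ∃ ε > 0, ∃ s b : ℝ, ∀ y, |y - x| < ε → h y = s * y + b := by
    rintro x ⟨p, hp, rfl⟩
    obtain ⟨ε, hε, s, -, -, hH, -, -⟩ := hloc p hp
    refine ⟨ε, hε, s, h (p.1 + p.2) - s * (p.1 + p.2), fun y hy => ?_⟩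
    have := hH (y - (p.1 + p.2)) hy
    rw [add_sub_cancel] at this
    rw [this]; ring
  obtain ⟨s₁, b₁, hF1, hF2⟩ := affine_of_locally_affine f I₁ hI₁pre p₀.1 ⟨p₀, hp₀, rfl⟩ hloc₁
  obtain ⟨s₂, b₂, hG1, hG2⟩ := affine_of_locally_affine g I₂ hI₂pre p₀.2 ⟨p₀, hp₀, rfl⟩ hloc₂
  obtain ⟨s₃, b₃, hH1, hH2⟩ := affine_of_locally_affine h I₃ hI₃pre (p₀.1 + p₀.2)
    ⟨p₀, hp₀, rfl⟩ hloc₃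
  -- All three slopes agree, via the common local slope at p₀.
  obtain ⟨ε, hε, s₀, hF, hG, hH, hm1, hm2⟩ := hloc p₀ hp₀
  have hs₁ : s₀ = s₁ := by
    refine hF2 p₀.1 ε hε (fun y hy => ⟨(y, p₀.2), ?_, rfl⟩) s₀ (f p₀.1 - s₀ * p₀.1)
      (fun y hy => ?_)
    · have := hm1 (y - p₀.1) hy
      simpa using this
    · have := hF (y - p₀.1) hy
      rw [add_sub_cancel] at this
      rw [this]; ring
  have hs₂ : s₀ = s₂ := by
    refine hG2 p₀.2 ε hε (fun y hy => ⟨(p₀.1, y), ?_, rfl⟩) s₀ (g p₀.2 - s₀ * p₀.2)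
      (fun y hy => ?_)
    · have := hm2 (y - p₀.2) hy
      simpa using this
    · have := hG (y - p₀.2) hy
      rw [add_sub_cancel] at this
      rw [this]; ring
  have hs₃ : s₀ = s₃ := by
    refine hH2 (p₀.1 + p₀.2) ε hε (fun y hy => ⟨(p₀.1 + (y - (p₀.1 + p₀.2)), p₀.2), ?_, by simp; ring⟩)
      s₀ (h (p₀.1 + p₀.2) - s₀ * (p₀.1 + p₀.2)) (fun y hy => ?_)
    · exact hm1 (y - (p₀.1 + p₀.2)) hy
    · have := hH (y - (p₀.1 + p₀.2)) hy
      rw [add_sub_cancel] at this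
      rw [this]; ring
  exact ⟨s₃, ⟨b₁, fun x hx => by rw [hF1 x hx, ← hs₁, hs₃]⟩,
    ⟨b₂, fun y hy => by rw [hG1 y hy, ← hs₂, hs₃]⟩,
    ⟨b₃, fun z hz => hH1 z hz⟩⟩
end

section
/- If a function θ : ℝ → ℝ respects a move ensemble Ω, then θ respects the joined move semigroup joinsemi(Ω) = join(⟨Ω⟩). -/
open Filter Set

noncomputable section

/-- The unrestricted translation (`b = false`) or reflection (`b = true`)
with parameter `p`: `x ↦ x + p`, resp. `x ↦ p - x`. -/
def uEval (b : Bool) (p : ℝ) (x : ℝ) : ℝ := if b then p - x else x + p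

/-- A restricted move `γ|_D`: a translation (`isRefl = false`) or a
reflection (`isRefl = true`) together with a domain. -/
structure Move where
  isRefl : Bool
  param : ℝ
  dom : Set ℝ

namespace Move

def eval (m : Move) : ℝ → ℝ := uEval m.isRefl m.param

/-- The character: `+1` for translations, `-1` for reflections. -/
def chi (m : Move) : ℝ := if m.isRefl then -1 else 1

def image (m : Move) : Set ℝ := m.eval '' m.dom

def graph (m : Move) : Set (ℝ × ℝ) := (fun x => (x, m.eval x)) '' m.dom

/-- Domains of moves must be open intervals or empty. -/
def ValidDom (D : Set ℝ) : Prop := IsOpen D ∧ D.OrdConnected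

/-- A valid move: open-interval-or-empty domain; moves with empty domain are
normalized (`param = 0`), so that there are exactly two empty moves, one of
each character. -/
def Valid (m : Move) : Prop := ValidDom m.dom ∧ (m.dom = ∅ → m.param = 0)

/-- The move `γ|_D` (normalized representative). -/
def mk' (b : Bool) (p : ℝ) (D : Set ℝ) : Move :=
  letI : Decidable (D = ∅) := Classical.dec _
  ⟨b, if D = ∅ then 0 else p, D⟩

/-- Composition of moves: `γ₂|_{D₂} ∘ γ₁|_{D₁} = (γ₂ ∘ γ₁)|_{D₁ ∩ γ₁⁻¹ D₂}`. -/
def comp (m2 m1 : Move) : Move :=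
  mk' (m2.isRefl != m1.isRefl)
    (if m2.isRefl then m2.param - m1.param else m1.param + m2.param)
    (m1.dom ∩ m1.eval ⁻¹' m2.dom)

/-- Inverse of a move: `(γ|_D)⁻¹ = γ⁻¹|_{γ(D)}`. -/
def inv (m : Move) : Move :=
  mk' m.isRefl (if m.isRefl then m.param else -m.param) (m.eval '' m.dom)

/-- The restriction partial order: `m1` is a restriction of `m2`. -/
def le (m1 m2 : Move) : Prop :=
  m1.isRefl = m2.isRefl ∧ m1.dom ⊆ m2.dom ∧ ∀ x ∈ m1.dom, m1.eval x = m2.eval x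

end Move

/-- A move ensemble: a set of (valid) moves. -/
def IsMoveEnsemble (Ω : Set Move) : Prop := ∀ m ∈ Ω, m.Valid

/-- A move semigroup: a move ensemble closed under composition and inverse. -/
def IsMoveSemigroup (Γ : Set Move) : Prop :=
  IsMoveEnsemble Γ ∧ (∀ m1 ∈ Γ, ∀ m2 ∈ Γ, Move.comp m2 m1 ∈ Γ) ∧
    (∀ m ∈ Γ, Move.inv m ∈ Γ)

/-- `⟨Ω⟩`: the smallest move semigroup containing `Ω`. -/
def semi (Ω : Set Move) : Set Move := ⋂₀ {Γ | IsMoveSemigroup Γ ∧ Ω ⊆ Γ}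

/-- Axiom (restrict). -/
def RestrictClosed (Ω : Set Move) : Prop :=
  ∀ m ∈ Ω, ∀ D' : Set ℝ, D' ⊆ m.dom → Move.ValidDom D' →
    Move.mk' m.isRefl m.param D' ∈ Ω

/-- The restriction closure of an ensemble. -/
def restrictCl (Ω : Set Move) : Set Move := ⋂₀ {Γ | RestrictClosed Γ ∧ Ω ⊆ Γ}

/-- Join-closed: restriction-closed and closed under continuation (joins). -/
def JoinClosed (Ω : Set Move) : Prop :=
  RestrictClosed Ω ∧
    ∀ (b : Bool) (p : ℝ) (J : Set (Set ℝ)), J.Nonempty →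
      (∀ I ∈ J, Move.mk' b p I ∈ Ω) → (⋃₀ J).OrdConnected →
      Move.mk' b p (⋃₀ J) ∈ Ω

/-- `join(Ω)`: the smallest join-closed ensemble containing `Ω`. -/
def joinCl (Ω : Set Move) : Set Move := ⋂₀ {Γ | JoinClosed Γ ∧ Ω ⊆ Γ}

/-- `joinsemi(Ω) = join(⟨Ω⟩)`: the joined move semigroup generated by `Ω`. -/
def joinsemi (Ω : Set Move) : Set Move := joinCl (semi Ω)

/-- `θ` respects the move `γ|_D`: `θ(γ(x)) = χ(γ)·θ(x) + c` on `D`. -/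
def Respects (θ : ℝ → ℝ) (m : Move) : Prop :=
  ∃ c : ℝ, ∀ x ∈ m.dom, θ (m.eval x) = m.chi * θ x + c

/-- `θ` respects each move of the ensemble `Ω`. -/
def RespectsAll (θ : ℝ → ℝ) (Ω : Set Move) : Prop := ∀ m ∈ Ω, Respects θ m

/-- All translation moves with graph contained in `O`. -/
def tMoves (O : Set (ℝ × ℝ)) : Set Move :=
  {m | m.isRefl = false ∧ m.Valid ∧ m.graph ⊆ O}

/-- All reflection moves with graph contained in `O`. -/
def rMoves (O : Set (ℝ × ℝ)) : Set Move :=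
  {m | m.isRefl = true ∧ m.Valid ∧ m.graph ⊆ O}

/-- All moves with graph contained in `O`. -/
def movesIn (O : Set (ℝ × ℝ)) : Set Move := {m | m.Valid ∧ m.graph ⊆ O}

/-- Translation moves graph of an ensemble. -/
def grPlus (Ω : Set Move) : Set (ℝ × ℝ) :=
  {q | ∃ m ∈ Ω, m.isRefl = false ∧ q ∈ m.graph}

/-- Reflection moves graph of an ensemble. -/
def grMinus (Ω : Set Move) : Set (ℝ × ℝ) :=
  {q | ∃ m ∈ Ω, m.isRefl = true ∧ q ∈ m.graph}

/-- `dom(O)`: union of the domains of the moves in `movesIn O`. -/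
def domOf (O : Set (ℝ × ℝ)) : Set ℝ := {x | ∃ m ∈ movesIn O, x ∈ m.dom}

/-- `im(O)`: union of the images of the moves in `movesIn O`. -/
def imOf (O : Set (ℝ × ℝ)) : Set ℝ := {x | ∃ m ∈ movesIn O, x ∈ m.image}

/-- domain of a move ensemble. -/
def domEns (Ω : Set Move) : Set ℝ := {x | ∃ m ∈ Ω, x ∈ m.dom}

/-- image of a move ensemble. -/
def imEns (Ω : Set Move) : Set ℝ := {x | ∃ m ∈ Ω, x ∈ m.image}

/-- Convergence of a sequence of unrestricted moves (character, parameter):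
all but finitely many have character `b`, and the parameters tend to `p`. -/
def ConvergesTo (γ : ℕ → Bool × ℝ) (b : Bool) (p : ℝ) : Prop :=
  (∀ᶠ i in atTop, (γ i).1 = b) ∧ Tendsto (fun i => (γ i).2) atTop (nhds p)

/-- Axiom (lim): fixed-domain limits of moves. -/
def LimClosed (Ω : Set Move) : Prop :=
  ∀ D : Set ℝ, Move.ValidDom D →
    ∀ (γ : ℕ → Bool × ℝ) (b : Bool) (p : ℝ), ConvergesTo γ b p →
      (∀ i, Move.mk' (γ i).1 (γ i).2 D ∈ Ω) → Move.mk' b p D ∈ Ω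

/-- `lim(Ω)`: the smallest superset of `Ω` satisfying (lim). -/
def limCl (Ω : Set Move) : Set Move := ⋂₀ {Γ | LimClosed Γ ∧ Ω ⊆ Γ}

/-- Axiom (arblim): limits of moves with converging domains. -/
def ArbLimClosed (Ω : Set Move) : Prop :=
  ∀ (γ : ℕ → Bool × ℝ) (b : Bool) (p : ℝ) (l u : ℕ → ℝ) (l₀ u₀ : ℝ),
    ConvergesTo γ b p → Tendsto l atTop (nhds l₀) → Tendsto u atTop (nhds u₀) →
    (∀ i, Move.mk' (γ i).1 (γ i).2 (Set.Ioo (l i) (u i)) ∈ Ω) →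
    Move.mk' b p (Set.Ioo l₀ u₀) ∈ Ω

/-- `arblim(Ω)`: the smallest superset of `Ω` satisfying (arblim). -/
def arblimCl (Ω : Set Move) : Set Move := ⋂₀ {Γ | ArbLimClosed Γ ∧ Ω ⊆ Γ}

/-- Axiom (kaleido). -/
def Kaleidoscopic (Ω : Set Move) : Prop :=
  ∀ D I : Set ℝ, Move.ValidDom D → Move.ValidDom I →
    (tMoves (D ×ˢ I) ⊆ Ω ↔ rMoves (D ×ˢ I) ⊆ Ω)

/-- Axiom (extend_A): continuous domain extension relative to the open set `A`. -/
def ExtendClosed (A : Set ℝ) (Ω : Set Move) : Prop :=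
  ∀ (b : Bool) (p : ℝ) (J : Set (Set ℝ)) (D : Set ℝ), J.Nonempty →
    (∀ I ∈ J, Move.mk' b p I ∈ Ω) → Move.ValidDom D →
    D ⊆ closure (⋃₀ J) ∩ A ∩ uEval b p ⁻¹' A →
    Move.mk' b p D ∈ Ω

/-- `joinextend_A(Ω)`: the smallest superset of `Ω` satisfying (extend_A). -/
def joinExtendCl (A : Set ℝ) (Ω : Set Move) : Set Move :=
  ⋂₀ {Γ | ExtendClosed A Γ ∧ Ω ⊆ Γ}

/-- A closed move semigroup with respect to the open set `A`. -/
def ClosedMoveSemigroup (A : Set ℝ) (Γ : Set Move) : Prop :=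
  IsMoveSemigroup Γ ∧ JoinClosed Γ ∧ Kaleidoscopic Γ ∧ LimClosed Γ ∧
    ExtendClosed A Γ

/-- The moves closure `ctscl(Ω)`: the smallest closed move semigroup
(with respect to `A`) containing `Ω`. -/
def ctscl (A : Set ℝ) (Ω : Set Move) : Set Move :=
  ⋂₀ {Γ | ClosedMoveSemigroup A Γ ∧ Ω ⊆ Γ}

/-- The set of maximal elements of `Ω` in the restriction partial order. -/
def MaxOf (Ω : Set Move) : Set Move :=
  {m ∈ Ω | ∀ m' ∈ Ω, Move.le m m' → Move.le m' m}

section Aux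

lemma mk'_isRefl (b : Bool) (p : ℝ) (D : Set ℝ) : (Move.mk' b p D).isRefl = b := rfl

lemma mk'_dom (b : Bool) (p : ℝ) (D : Set ℝ) : (Move.mk' b p D).dom = D := rfl

lemma mk'_eval (b : Bool) (p : ℝ) {D : Set ℝ} (h : D.Nonempty) :
    (Move.mk' b p D).eval = uEval b p := by
  unfold Move.mk' Move.eval
  letI : Decidable (D = ∅) := Classical.dec _
  show uEval b (if D = ∅ then 0 else p) = uEval b p
  rw [if_neg (Set.nonempty_iff_ne_empty.mp h)]

lemma mk'_chi (b : Bool) (p : ℝ) (D : Set ℝ) :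
    (Move.mk' b p D).chi = if b then -1 else 1 := rfl

lemma mk'_valid {D : Set ℝ} (b : Bool) (p : ℝ) (hD : Move.ValidDom D) :
    (Move.mk' b p D).Valid := by
  refine ⟨hD, fun h => ?_⟩
  have hD' : D = ∅ := h
  simp [Move.mk', hD']

lemma respects_mk' {θ : ℝ → ℝ} {b : Bool} {p : ℝ} {D : Set ℝ}
    (h : ∃ c : ℝ, ∀ x ∈ D, θ (uEval b p x) = (if b then (-1:ℝ) else 1) * θ x + c) :
    Respects θ (Move.mk' b p D) := by
  obtain ⟨c, hc⟩ := h
  refine ⟨c, fun x hx => ?_⟩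
  rw [mk'_dom] at hx
  rw [mk'_eval b p ⟨x, hx⟩, mk'_chi]
  exact hc x hx

lemma ordConn_preimage (b : Bool) (p : ℝ) {s : Set ℝ} (hs : s.OrdConnected) :
    (uEval b p ⁻¹' s).OrdConnected := by
  constructor
  intro x hx y hy z hz
  have hx' : uEval b p x ∈ s := hx
  have hy' : uEval b p y ∈ s := hy
  have h1 : x ≤ z := hz.1
  have h2 : z ≤ y := hz.2
  show uEval b p z ∈ s
  cases b with
  | false =>
    refine hs.out hx' hy' ?_
    simp [uEval, Set.mem_Icc] at *
    refine ⟨by linarith, by linarith⟩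
  | true =>
    refine hs.out hy' hx' ?_
    simp [uEval, Set.mem_Icc] at *
    refine ⟨by linarith, by linarith⟩

lemma uEval_continuous (b : Bool) (p : ℝ) : Continuous (uEval b p) := by
  cases b
  · show Continuous fun x : ℝ => x + p
    fun_prop
  · show Continuous fun x : ℝ => p - x
    fun_prop

lemma uEval_inv (b : Bool) (p : ℝ) (x : ℝ) :
    uEval b (if b then p else -p) (uEval b p x) = x := by
  cases b <;> simp [uEval] <;> ring

lemma image_uEval (b : Bool) (p : ℝ) (s : Set ℝ) :
    uEval b p '' s = uEval b (if b then p else -p) ⁻¹' s := by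
  ext y
  constructor
  · rintro ⟨x, hx, rfl⟩
    simpa [uEval_inv] using hx
  · intro hy
    refine ⟨uEval b (if b then p else -p) y, hy, ?_⟩
    cases b <;> simp [uEval] <;> ring

lemma validDom_preimage (b : Bool) (p : ℝ) {s : Set ℝ} (hs : Move.ValidDom s) :
    Move.ValidDom (uEval b p ⁻¹' s) :=
  ⟨hs.1.preimage (uEval_continuous b p), ordConn_preimage b p hs.2⟩

lemma validDom_image (b : Bool) (p : ℝ) {s : Set ℝ} (hs : Move.ValidDom s) :
    Move.ValidDom (uEval b p '' s) := by
  rw [image_uEval]; exact validDom_preimage _ _ hs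

/-- The set of valid moves respected by θ. -/
def RespSet (θ : ℝ → ℝ) : Set Move := {m | m.Valid ∧ Respects θ m}

lemma chi_sq (m : Move) : m.chi * m.chi = 1 := by
  unfold Move.chi; split <;> norm_num

lemma respSet_semigroup (θ : ℝ → ℝ) : IsMoveSemigroup (RespSet θ) := by
  refine ⟨fun m hm => hm.1, ?_, ?_⟩
  · -- composition
    rintro m1 ⟨⟨hv1, _⟩, c1, hc1⟩ m2 ⟨⟨hv2, _⟩, c2, hc2⟩
    unfold Move.comp
    constructor
    · exact mk'_valid _ _ ⟨hv1.1.inter ((hv2.1.preimage (uEval_continuous _ _))),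
        hv1.2.inter (ordConn_preimage _ _ hv2.2)⟩
    · apply respects_mk'
      refine ⟨m2.chi * c1 + c2, fun x hx => ?_⟩
      obtain ⟨hx1, hx2⟩ := hx
      have e1 := hc1 x hx1
      have e2 := hc2 _ hx2
      have key : uEval (m2.isRefl != m1.isRefl)
          (if m2.isRefl then m2.param - m1.param else m1.param + m2.param) x
          = m2.eval (m1.eval x) := by
        unfold Move.eval
        rcases m1 with ⟨b1, p1, D1⟩; rcases m2 with ⟨b2, p2, D2⟩
        cases b1 <;> cases b2 <;> simp [uEval] <;> ring
      have chis : (if (m2.isRefl != m1.isRefl) then (-1:ℝ) else 1) = m2.chi * m1.chi := by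
        unfold Move.chi
        cases h1 : m1.isRefl <;> cases h2 : m2.isRefl <;> simp <;> norm_num
      rw [key, e2, e1, chis]
      ring
  · -- inverse
    rintro m ⟨⟨hv, _⟩, c, hc⟩
    unfold Move.inv
    refine ⟨mk'_valid _ _ (validDom_image m.isRefl m.param hv), ?_⟩
    apply respects_mk'
    refine ⟨-m.chi * c, ?_⟩
    · rintro y ⟨x, hx, rfl⟩
      have inv_eval : uEval m.isRefl (if m.isRefl then m.param else -m.param) (m.eval x) = x :=
        uEval_inv m.isRefl m.param x
      have hchi : (if m.isRefl then (-1:ℝ) else 1) = m.chi := rfl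
      rw [inv_eval, hchi, hc x hx]
      linear_combination (-θ x) * chi_sq m

lemma respSet_joinClosed (θ : ℝ → ℝ) : JoinClosed (RespSet θ) := by
  constructor
  · -- restriction-closed
    rintro m ⟨_, c, hc⟩ D' hsub hvD'
    refine ⟨mk'_valid _ _ hvD', ?_⟩
    apply respects_mk'
    exact ⟨c, fun x hx => hc x (hsub hx)⟩
  · -- join-closed
    intro b p J hJ hmem hconn
    set D := ⋃₀ J with hD
    have hopen : IsOpen D := by
      apply isOpen_sUnion
      intro I hI
      exact ((hmem I hI).1.1).1
    refine ⟨mk'_valid _ _ ⟨hopen, hconn⟩, ?_⟩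
    apply respects_mk'
    -- the "gap" function is locally constant on D
    set g : ℝ → ℝ := fun x => θ (uEval b p x) - (if b then (-1:ℝ) else 1) * θ x with hg
    have hloc : ∀ x ∈ D, ∃ I ∈ J, x ∈ I ∧ ∀ y ∈ I, g y = g x := by
      intro x hx
      obtain ⟨I, hI, hxI⟩ := hx
      obtain ⟨c, hc⟩ := (hmem I hI).2
      have hIne : I.Nonempty := ⟨x, hxI⟩
      have hcI : ∀ y ∈ I, g y = c := by
        intro y hy
        have := hc y hy
        rw [mk'_eval b p hIne, mk'_chi] at this
        simp only [hg]
        rw [this]; ring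
      exact ⟨I, hI, hxI, fun y hy => by rw [hcI y hy, hcI x hxI]⟩
    rcases Set.eq_empty_or_nonempty D with hDe | ⟨x₀, hx₀⟩
    · exact ⟨0, fun x hx => absurd hx (by rw [hDe] at *; exact Set.notMem_empty x)⟩
    · refine ⟨g x₀, fun x hx => ?_⟩
      -- show g x = g x₀ using connectedness
      have hgc : g x = g x₀ := by
        by_contra hne
        set U : Set ℝ := ⋃₀ {I | I ∈ J ∧ I.Nonempty ∧ ∀ y ∈ I, g y = g x₀} with hU
        set V : Set ℝ := ⋃₀ {I | I ∈ J ∧ I.Nonempty ∧ ∀ y ∈ I, g y ≠ g x₀} with hV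
        have hUopen : IsOpen U := isOpen_sUnion fun I hI => ((hmem I hI.1).1.1).1
        have hVopen : IsOpen V := isOpen_sUnion fun I hI => ((hmem I hI.1).1.1).1
        have hcover : D ⊆ U ∪ V := by
          intro z hz
          obtain ⟨I, hI, hzI, hconst⟩ := hloc z hz
          by_cases hcase : g z = g x₀
          · exact Or.inl ⟨I, ⟨hI, ⟨z, hzI⟩, fun y hy => by rw [hconst y hy, hcase]⟩, hzI⟩
          · exact Or.inr ⟨I, ⟨hI, ⟨z, hzI⟩, fun y hy => by rw [hconst y hy]; exact hcase⟩, hzI⟩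
        have hUsub : U ⊆ D := by
          rintro z ⟨I, hI, hzI⟩; exact ⟨I, hI.1, hzI⟩
        have hVsub : V ⊆ D := by
          rintro z ⟨I, hI, hzI⟩; exact ⟨I, hI.1, hzI⟩
        have hx₀U : x₀ ∈ U := by
          obtain ⟨I, hI, hxI, hconst⟩ := hloc x₀ hx₀
          exact ⟨I, ⟨hI, ⟨x₀, hxI⟩, hconst⟩, hxI⟩
        have hxV : x ∈ V := by
          obtain ⟨I, hI, hxI, hconst⟩ := hloc x hx
          exact ⟨I, ⟨hI, ⟨x, hxI⟩, fun y hy => by rw [hconst y hy]; exact hne⟩, hxI⟩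
        have hpre : IsPreconnected D := hconn.isPreconnected
        obtain ⟨z, hzD, hzU, hzV⟩ := hpre U V hUopen hVopen hcover ⟨x₀, hx₀, hx₀U⟩ ⟨x, hx, hxV⟩
        obtain ⟨I, hI, hzI⟩ := hzU
        obtain ⟨I', hI', hzI'⟩ := hzV
        exact hI'.2.2 z hzI' (hI.2.2 z hzI)
      have : θ (uEval b p x) - (if b then (-1:ℝ) else 1) * θ x = g x₀ := by
        rw [← hgc]
      linarith [this]

end Aux

/-- If `θ` respects a move ensemble `Ω`, then `θ` respects the joined
move semigroup `joinsemi(Ω) = join(⟨Ω⟩)`. -/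
theorem respects_joinsemi (θ : ℝ → ℝ) (Ω : Set Move)
    (hΩ : IsMoveEnsemble Ω) (hresp : RespectsAll θ Ω) :
    RespectsAll θ (joinsemi Ω) := by
  have hΩsub : Ω ⊆ RespSet θ := fun m hm => ⟨hΩ m hm, hresp m hm⟩
  have hsemi : semi Ω ⊆ RespSet θ :=
    Set.sInter_subset_of_mem ⟨respSet_semigroup θ, hΩsub⟩
  have hjoin : joinsemi Ω ⊆ RespSet θ :=
    Set.sInter_subset_of_mem ⟨respSet_joinClosed θ, hsemi⟩
  exact fun m hm => (hjoin hm).2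
end
end

section
/- Let Ω be a move ensemble and let O ⊆ ℝ² be a connected open set; set D = dom(O) and I = im(O). Then: (1) if Gr₊(Ω) contains O, then Gr₊(⟨Ω⟩) contains (D ∪ I) × (D ∪ I); (2) if Gr₋(Ω) contains O, then Gr₋(⟨Ω⟩) contains (D × I) ∪ (I × D) and Gr₊(⟨Ω⟩) contains (D × D) ∪ (I × I); (3) if Gr±(Ω) contains O, then Gr±(⟨Ω⟩) contains (D ∪ I) × (D ∪ I). -/
open Filter Set

noncomputable section

section Aux

variable {Ω : Set Move}

lemma mem_graph_iff {m : Move} {x y : ℝ} :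
    (x, y) ∈ m.graph ↔ x ∈ m.dom ∧ m.eval x = y := by
  constructor
  · rintro ⟨x', hx', hxy⟩
    have h1 : x' = x := congrArg Prod.fst hxy
    subst h1
    exact ⟨hx', congrArg Prod.snd hxy⟩
  · rintro ⟨hx, hy⟩
    exact ⟨x, hx, by simp [hy]⟩

lemma mk'_param {b : Bool} {p : ℝ} {D : Set ℝ} (h : D.Nonempty) :
    (Move.mk' b p D).param = p := by
  simp [Move.mk', h.ne_empty]

lemma mem_semi {m : Move} (hm : m ∈ Ω) : m ∈ semi Ω :=
  fun _Γ hΓ => hΓ.2 hm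

lemma semi_comp {m1 m2 : Move} (h1 : m1 ∈ semi Ω) (h2 : m2 ∈ semi Ω) :
    m2.comp m1 ∈ semi Ω :=
  fun Γ hΓ => hΓ.1.2.1 m1 (h1 Γ hΓ) m2 (h2 Γ hΓ)

lemma semi_inv {m : Move} (h : m ∈ semi Ω) : m.inv ∈ semi Ω :=
  fun Γ hΓ => hΓ.1.2.2 m (h Γ hΓ)

lemma comp_spec {m1 m2 : Move} {x : ℝ} (h1 : x ∈ m1.dom) (h2 : m1.eval x ∈ m2.dom) :
    x ∈ (m2.comp m1).dom ∧ (m2.comp m1).eval x = m2.eval (m1.eval x) ∧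
      (m2.comp m1).isRefl = (m2.isRefl != m1.isRefl) := by
  have hx : x ∈ m1.dom ∩ m1.eval ⁻¹' m2.dom := ⟨h1, h2⟩
  refine ⟨hx, ?_, rfl⟩
  have hp : (m2.comp m1).param =
      (if m2.isRefl then m2.param - m1.param else m1.param + m2.param) :=
    mk'_param ⟨x, hx⟩
  have hb : (m2.comp m1).isRefl = (m2.isRefl != m1.isRefl) := rfl
  unfold Move.eval
  rw [hp, hb]
  cases hb1 : m1.isRefl <;> cases hb2 : m2.isRefl <;> simp [uEval] <;> ring

lemma inv_spec {m : Move} {x : ℝ} (h : x ∈ m.dom) :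
    m.eval x ∈ m.inv.dom ∧ m.inv.eval (m.eval x) = x ∧ m.inv.isRefl = m.isRefl := by
  have hx : m.eval x ∈ m.eval '' m.dom := ⟨x, h, rfl⟩
  refine ⟨hx, ?_, rfl⟩
  have hp : m.inv.param = (if m.isRefl then m.param else -m.param) := mk'_param ⟨_, hx⟩
  have hb : m.inv.isRefl = m.isRefl := rfl
  unfold Move.eval
  rw [hp, hb]
  cases hb1 : m.isRefl <;> simp [uEval] <;> ring

/-- A move of character `b` in `semi Ω` maps `a` to `c`. -/
def RelSemi (Ω : Set Move) (b : Bool) (a c : ℝ) : Prop :=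
  ∃ m ∈ semi Ω, m.isRefl = b ∧ a ∈ m.dom ∧ m.eval a = c

lemma RelSemi.comp {b1 b2 : Bool} {a c d : ℝ}
    (h1 : RelSemi Ω b1 a c) (h2 : RelSemi Ω b2 c d) : RelSemi Ω (b2 != b1) a d := by
  obtain ⟨m1, hm1, hb1, hd1, he1⟩ := h1
  obtain ⟨m2, hm2, hb2, hd2, he2⟩ := h2
  obtain ⟨hd, he, hb⟩ := comp_spec hd1 (he1 ▸ hd2)
  exact ⟨m2.comp m1, semi_comp hm1 hm2, by rw [hb, hb1, hb2], hd,
    by rw [he, he1, he2]⟩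

lemma RelSemi.symm {b : Bool} {a c : ℝ} (h : RelSemi Ω b a c) : RelSemi Ω b c a := by
  obtain ⟨m, hm, hb, hd, he⟩ := h
  obtain ⟨hd', he', hb'⟩ := inv_spec hd
  rw [he] at hd' he'
  exact ⟨m.inv, semi_inv hm, hb'.trans hb, hd', he'⟩

lemma RelSemi.mem_grPlus {a c : ℝ} (h : RelSemi Ω false a c) :
    (a, c) ∈ grPlus (semi Ω) := by
  obtain ⟨m, hm, hb, hd, he⟩ := h
  exact ⟨m, hm, hb, mem_graph_iff.mpr ⟨hd, he⟩⟩

lemma RelSemi.mem_grMinus {a c : ℝ} (h : RelSemi Ω true a c) :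
    (a, c) ∈ grMinus (semi Ω) := by
  obtain ⟨m, hm, hb, hd, he⟩ := h
  exact ⟨m, hm, hb, mem_graph_iff.mpr ⟨hd, he⟩⟩

lemma domOf_proj {O : Set (ℝ × ℝ)} {x : ℝ} (h : x ∈ domOf O) : ∃ y, (x, y) ∈ O := by
  obtain ⟨m, ⟨_hv, hg⟩, hx⟩ := h
  exact ⟨m.eval x, hg ⟨x, hx, rfl⟩⟩

lemma imOf_proj {O : Set (ℝ × ℝ)} {x : ℝ} (h : x ∈ imOf O) : ∃ y, (y, x) ∈ O := by
  obtain ⟨m, ⟨_hv, hg⟩, hx⟩ := h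
  obtain ⟨x', hx', rfl⟩ := hx
  exact ⟨x', hg ⟨x', hx', rfl⟩⟩

lemma conn_rel (Ω : Set Move) (b : Bool) (O : Set (ℝ × ℝ)) (hOopen : IsOpen O)
    (hconn : IsPreconnected O) (hO : ∀ z ∈ O, RelSemi Ω b z.1 z.2)
    (z₀ : ℝ × ℝ) (hz₀ : z₀ ∈ O) : ∀ z ∈ O, RelSemi Ω false z₀.1 z.1 := by
  have loc : ∀ (a : ℝ) (w x : Set ℝ), a ∈ w → w ×ˢ x ⊆ O →
      ∀ z ∈ w ×ˢ x, RelSemi Ω false a z.1 := by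
    intro a w x haw hsub z hz
    have h1 : RelSemi Ω b a z.2 := hO (a, z.2) (hsub (Set.mk_mem_prod haw hz.2))
    have h2 : RelSemi Ω b z.1 z.2 := hO z (hsub hz)
    simpa using h1.comp h2.symm
  set u : Set (ℝ × ℝ) :=
    ⋃₀ {r | IsOpen r ∧ r ⊆ O ∧ ∀ z ∈ r, RelSemi Ω false z₀.1 z.1} with hu_def
  set v : Set (ℝ × ℝ) :=
    ⋃₀ {r | IsOpen r ∧ r ⊆ O ∧ ∀ z ∈ r, ¬ RelSemi Ω false z₀.1 z.1} with hv_def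
  have hu : IsOpen u := isOpen_sUnion fun r hr => hr.1
  have hv : IsOpen v := isOpen_sUnion fun r hr => hr.1
  have hcover : O ⊆ u ∪ v := by
    intro z hz
    obtain ⟨w, x, hw, hx, hzw, hzx, hsub⟩ := isOpen_prod_iff.mp hOopen z.1 z.2 hz
    by_cases hc : RelSemi Ω false z₀.1 z.1
    · left
      refine ⟨w ×ˢ x, ⟨hw.prod hx, fun p hp => hsub hp, ?_⟩, Set.mk_mem_prod hzw hzx⟩
      intro z' hz'
      simpa using hc.comp (loc z.1 w x hzw (fun p hp => hsub hp) z' hz')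
    · right
      refine ⟨w ×ˢ x, ⟨hw.prod hx, fun p hp => hsub hp, ?_⟩, Set.mk_mem_prod hzw hzx⟩
      intro z' hz' hcontra
      have hloc := loc z.1 w x hzw (fun p hp => hsub hp) z' hz'
      exact hc (by simpa using hcontra.comp hloc.symm)
  have huO : (O ∩ u).Nonempty := by
    obtain ⟨w, x, hw, hx, hzw, hzx, hsub⟩ := isOpen_prod_iff.mp hOopen z₀.1 z₀.2 hz₀
    exact ⟨z₀, hz₀, ⟨w ×ˢ x, ⟨hw.prod hx, fun p hp => hsub hp,
      loc z₀.1 w x hzw (fun p hp => hsub hp)⟩, Set.mk_mem_prod hzw hzx⟩⟩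
  intro z hz
  by_contra hc
  have hvO : (O ∩ v).Nonempty := by
    rcases hcover hz with h | h
    · obtain ⟨r, hr, hzr⟩ := h; exact absurd (hr.2.2 z hzr) hc
    · exact ⟨z, hz, h⟩
  obtain ⟨p, hpO, hpu, hpv⟩ := hconn u v hu hv hcover huO hvO
  obtain ⟨ru, hru, hpru⟩ := hpu
  obtain ⟨rv, hrv, hprv⟩ := hpv
  exact hrv.2.2 p hprv (hru.2.2 p hpru)

end Aux

/-- Moves through a connected open set generate a semigroup whose graph
contains the corresponding products of domain and image. -/
theorem open_sets_of_moves (Ω : Set Move) (hΩ : IsMoveEnsemble Ω)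
    (O : Set (ℝ × ℝ)) (hOopen : IsOpen O) (hOconn : IsConnected O) :
    (O ⊆ grPlus Ω →
      (domOf O ∪ imOf O) ×ˢ (domOf O ∪ imOf O) ⊆ grPlus (semi Ω)) ∧
    (O ⊆ grMinus Ω →
      (domOf O ×ˢ imOf O) ∪ (imOf O ×ˢ domOf O) ⊆ grMinus (semi Ω) ∧
      (domOf O ×ˢ domOf O) ∪ (imOf O ×ˢ imOf O) ⊆ grPlus (semi Ω)) ∧
    (O ⊆ grPlus Ω ∩ grMinus Ω →
      (domOf O ∪ imOf O) ×ˢ (domOf O ∪ imOf O)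
        ⊆ grPlus (semi Ω) ∩ grMinus (semi Ω)) := by
  obtain ⟨z₀, hz₀⟩ := hOconn.nonempty
  have hpre := hOconn.isPreconnected
  refine ⟨?_, ?_, ?_⟩
  · -- Part 1: translations
    intro hsub
    have hO1 : ∀ z ∈ O, RelSemi Ω false z.1 z.2 := by
      intro z hz
      obtain ⟨m, hm, hb, hg⟩ := hsub hz
      obtain ⟨hd, he⟩ := mem_graph_iff.mp hg
      exact ⟨m, mem_semi hm, hb, hd, he⟩
    have key := conn_rel Ω false O hOopen hpre hO1 z₀ hz₀
    have reach : ∀ p ∈ domOf O ∪ imOf O, RelSemi Ω false z₀.1 p := by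
      intro p hp
      rcases hp with hp | hp
      · obtain ⟨y, hy⟩ := domOf_proj hp
        exact key (p, y) hy
      · obtain ⟨y, hy⟩ := imOf_proj hp
        exact (key (y, p) hy).comp (hO1 (y, p) hy)
    intro z hz
    exact ((reach z.1 hz.1).symm.comp (reach z.2 hz.2)).mem_grPlus
  · -- Part 2: reflections
    intro hsub
    have hO2 : ∀ z ∈ O, RelSemi Ω true z.1 z.2 := by
      intro z hz
      obtain ⟨m, hm, hb, hg⟩ := hsub hz
      obtain ⟨hd, he⟩ := mem_graph_iff.mp hg
      exact ⟨m, mem_semi hm, hb, hd, he⟩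
    have key := conn_rel Ω true O hOopen hpre hO2 z₀ hz₀
    have reachD : ∀ p ∈ domOf O, RelSemi Ω false z₀.1 p := by
      intro p hp
      obtain ⟨y, hy⟩ := domOf_proj hp
      exact key (p, y) hy
    have reachI : ∀ p ∈ imOf O, RelSemi Ω true z₀.1 p := by
      intro p hp
      obtain ⟨y, hy⟩ := imOf_proj hp
      exact (key (y, p) hy).comp (hO2 (y, p) hy)
    constructor
    · rintro z (hz | hz)
      · exact ((reachD z.1 hz.1).symm.comp (reachI z.2 hz.2)).mem_grMinus
      · exact ((reachI z.1 hz.1).symm.comp (reachD z.2 hz.2)).mem_grMinus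
    · rintro z (hz | hz)
      · exact ((reachD z.1 hz.1).symm.comp (reachD z.2 hz.2)).mem_grPlus
      · exact ((reachI z.1 hz.1).symm.comp (reachI z.2 hz.2)).mem_grPlus
  · -- Part 3: both
    intro hsub
    have hO1 : ∀ z ∈ O, RelSemi Ω false z.1 z.2 := by
      intro z hz
      obtain ⟨m, hm, hb, hg⟩ := (hsub hz).1
      obtain ⟨hd, he⟩ := mem_graph_iff.mp hg
      exact ⟨m, mem_semi hm, hb, hd, he⟩
    have hO2 : ∀ z ∈ O, RelSemi Ω true z.1 z.2 := by
      intro z hz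
      obtain ⟨m, hm, hb, hg⟩ := (hsub hz).2
      obtain ⟨hd, he⟩ := mem_graph_iff.mp hg
      exact ⟨m, mem_semi hm, hb, hd, he⟩
    have key := conn_rel Ω false O hOopen hpre hO1 z₀ hz₀
    have reach : ∀ p ∈ domOf O ∪ imOf O, RelSemi Ω false z₀.1 p := by
      intro p hp
      rcases hp with hp | hp
      · obtain ⟨y, hy⟩ := domOf_proj hp
        exact key (p, y) hy
      · obtain ⟨y, hy⟩ := imOf_proj hp
        exact (key (y, p) hy).comp (hO1 (y, p) hy)
    intro z hz
    have h1 := reach z.1 hz.1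
    have h2 := reach z.2 hz.2
    have hT : RelSemi Ω true z₀.1 z₀.2 := hO2 z₀ hz₀
    have hS : RelSemi Ω false z₀.1 z₀.2 := hO1 z₀ hz₀
    refine ⟨(h1.symm.comp h2).mem_grPlus, ?_⟩
    -- reflection: z.1 → z₀.1 → z₀.2 (refl), then z₀.2 → z₀.1 → z.2 (transl)
    have c1 : RelSemi Ω true z.1 z₀.2 := h1.symm.comp hT
    have c2 : RelSemi Ω false z₀.2 z.2 := hS.symm.comp h2
    exact (c1.comp c2).mem_grMinus
end
end

section
/- Let θ : ℝ → ℝ be a bounded function and let D, I ⊆ ℝ be open intervals. The following are equivalent: (1) θ respects tMoves(D × I); (2) θ respects rMoves(D × I); (3) θ respects moves(D × I); (4) θ is affine on D and on I with the same slope. -/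
open Filter Set

noncomputable section

private lemma phi_linear (φ : ℝ → ℝ) (ε C : ℝ) (hε : 0 < ε)
    (hadd : ∀ x y : ℝ, |x| < ε → |y| < ε → φ (x + y) = φ x + φ y)
    (hbd : ∀ x : ℝ, |x| < ε → |φ x| ≤ C) :
    ∃ s : ℝ, ∀ x : ℝ, |x| < ε → φ x = s * x := by
  have φ0 : φ 0 = 0 := by
    have := hadd 0 0 (by simpa using hε) (by simpa using hε)
    simp at this; linarith
  -- scaling by naturals
  have hscale : ∀ (n : ℕ) (x : ℝ), |(n : ℝ) * x| < ε → |x| < ε →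
      φ ((n : ℝ) * x) = n * φ x := by
    intro n
    induction n with
    | zero => intro x _ _; simpa using φ0
    | succ n ih =>
      intro x hnx hx
      have hnx' : |(n : ℝ) * x| < ε := by
        refine lt_of_le_of_lt ?_ hnx
        rw [abs_mul, abs_mul]
        apply mul_le_mul_of_nonneg_right _ (abs_nonneg x)
        rw [Nat.abs_cast, Nat.abs_cast]
        exact_mod_cast Nat.le_succ n
      have h2 : ((n : ℝ) + 1) * x = (n : ℝ) * x + x := by ring
      rw [Nat.cast_succ, h2, hadd _ _ hnx' hx, ih x hnx' hx]
      ring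
  -- consistency
  have hcons : ∀ (m k : ℕ), 0 < m → 0 < k → ∀ x : ℝ, |x / m| < ε → |x / k| < ε →
      (m : ℝ) * φ (x / m) = (k : ℝ) * φ (x / k) := by
    have aux : ∀ (m k : ℕ), 0 < m → 0 < k → ∀ x : ℝ, |x / m| < ε →
        (m : ℝ) * φ (x / m) = ((m * k : ℕ) : ℝ) * φ (x / (m * k : ℕ)) := by
      intro m k hm hk x hxm
      have hmne : (m : ℝ) ≠ 0 := Nat.cast_ne_zero.mpr hm.ne'
      have hkne : (k : ℝ) ≠ 0 := Nat.cast_ne_zero.mpr hk.ne'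
      have h1 : x / m = (k : ℝ) * (x / (m * k : ℕ)) := by
        push_cast; field_simp
      have hsmall : |x / ((m * k : ℕ) : ℝ)| < ε := by
        refine lt_of_le_of_lt ?_ hxm
        have hmR : (0:ℝ) < m := by exact_mod_cast hm
        have hkR : (1:ℝ) ≤ k := by exact_mod_cast hk
        rw [abs_div, abs_div, Nat.abs_cast, Nat.abs_cast]
        push_cast
        gcongr
        nlinarith [abs_nonneg x]
      rw [h1, hscale k _ (by rw [← h1]; exact hxm) hsmall]
      push_cast; ring
    intro m k hm hk x hxm hxk
    rw [aux m k hm hk x hxm, aux k m hk hm x hxk, Nat.mul_comm]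
  have hC : 0 ≤ C := le_trans (abs_nonneg _) (hbd 0 (by simpa using hε))
  -- global extension
  set n : ℝ → ℕ := fun x => ⌊|x| / ε⌋₊ + 1 with hn
  have hnpos : ∀ x : ℝ, 0 < n x := fun x => Nat.succ_pos _
  have hnx : ∀ x : ℝ, |x / n x| < ε := by
    intro x
    have h1 : |x| / ε < (n x : ℝ) := by
      rw [hn]; push_cast; exact Nat.lt_floor_add_one _
    rw [abs_div, Nat.abs_cast, div_lt_iff₀ (by positivity)]
    rw [div_lt_iff₀ hε] at h1
    linarith
  set Φ : ℝ → ℝ := fun x => (n x : ℝ) * φ (x / n x) with hΦ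
  have hΦeq : ∀ (x : ℝ) (k : ℕ), 0 < k → |x / k| < ε → Φ x = (k : ℝ) * φ (x / k) :=
    fun x k hk hxk => hcons (n x) k (hnpos x) hk x (hnx x) hxk
  have hΦφ : ∀ x : ℝ, |x| < ε → Φ x = φ x := by
    intro x hx
    have := hΦeq x 1 Nat.one_pos (by simpa using hx)
    simpa using this
  have hΦadd : ∀ x y : ℝ, Φ (x + y) = Φ x + Φ y := by
    intro x y
    set N : ℕ := n x + n y + n (x + y) with hN
    have hNpos : 0 < N := by positivity
    have hNR : (0:ℝ) < N := by exact_mod_cast hNpos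
    have hmono : ∀ z : ℝ, ∀ k : ℕ, n z ≤ k → 0 < k → |z / k| < ε := by
      intro z k hk hkpos
      have h1 := hnx z
      rw [abs_div, Nat.abs_cast] at h1 ⊢
      rw [div_lt_iff₀ (by exact_mod_cast hkpos)]
      rw [div_lt_iff₀ (by exact_mod_cast (hnpos z))] at h1
      have : (n z : ℝ) ≤ k := by exact_mod_cast hk
      nlinarith
    have hxN : |x / N| < ε := hmono x N (by omega) hNpos
    have hyN : |y / N| < ε := hmono y N (by omega) hNpos
    have hxyN : |(x + y) / N| < ε := hmono (x + y) N (by omega) hNpos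
    rw [hΦeq x N hNpos hxN, hΦeq y N hNpos hyN, hΦeq (x + y) N hNpos hxyN]
    have : (x + y) / N = x / N + y / N := by ring
    rw [this, hadd _ _ hxN hyN]; ring
  -- continuity at 0
  have h0 : ∀ η : ℝ, 0 < η → ∃ δ : ℝ, 0 < δ ∧ ∀ z : ℝ, |z| < δ → |Φ z| ≤ η := by
    intro η hη
    obtain ⟨k, hk⟩ := exists_nat_gt (C / η)
    have hkpos : 0 < k := by
      by_contra h
      push_neg at h
      interval_cases k
      simp at hk
      nlinarith [div_nonneg hC hη.le]
    have hkR : (0:ℝ) < k := by exact_mod_cast hkpos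
    refine ⟨ε / k, by positivity, fun z hz => ?_⟩
    have hzε : |z| < ε := lt_of_lt_of_le hz (by
      rw [div_le_iff₀ hkR]; nlinarith [(by exact_mod_cast hkpos : (1:ℝ) ≤ k)])
    have hkz : |(k : ℝ) * z| < ε := by
      rw [abs_mul, Nat.abs_cast]
      rw [lt_div_iff₀ hkR] at hz; linarith [hz]
    have h1 : φ ((k:ℝ) * z) = k * φ z := hscale k z hkz hzε
    have h2 : |φ z| ≤ C / k := by
      rw [le_div_iff₀ hkR]
      calc |φ z| * k = |(k:ℝ) * φ z| := by
            rw [abs_mul, Nat.abs_cast]; ring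
        _ = |φ ((k:ℝ) * z)| := by rw [h1]
        _ ≤ C := hbd _ hkz
    rw [hΦφ z hzε]
    refine le_trans h2 ?_
    rw [div_le_iff₀ hkR]
    rw [div_lt_iff₀ hη] at hk
    nlinarith
  -- rational scaling via AddMonoidHom
  set Φ' : ℝ →+ ℝ := AddMonoidHom.mk' Φ hΦadd with hΦ'
  have hrat : ∀ q : ℚ, Φ (q : ℝ) = (q : ℝ) * Φ 1 := by
    intro q
    have := map_ratCast_smul Φ' ℝ ℝ q (1 : ℝ)
    simp only [smul_eq_mul, mul_one] at this
    exact this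
  -- linearity
  have hlin : ∀ x : ℝ, Φ x = Φ 1 * x := by
    intro x
    by_contra hne
    set A := Φ x - Φ 1 * x with hA
    have hApos : 0 < |A| := abs_pos.mpr (sub_ne_zero.mpr hne)
    have key : |A| ≤ |A| / 2 := by
      obtain ⟨δ, hδpos, hδ⟩ := h0 (|A| / 4) (by positivity)
      set r : ℝ := min δ ((|A| / 4) / (|Φ 1| + 1)) with hr
      have hrpos : 0 < r := lt_min hδpos (by positivity)
      obtain ⟨q, hq1, hq2⟩ := exists_rat_btwn (show x - r < x by linarith)
      have hxq : |x - (q:ℝ)| < r := by rw [abs_lt]; constructor <;> linarith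
      have e1 : Φ x - Φ (q:ℝ) = Φ (x - q) := by
        have := hΦadd (x - q) (q : ℝ); simp at this; linarith
      have b1 : |Φ (x - q)| ≤ |A| / 4 := hδ _ (lt_of_lt_of_le hxq (min_le_left _ _))
      have b2 : |(q:ℝ) * Φ 1 - x * Φ 1| ≤ |A| / 4 := by
        rw [← sub_mul, abs_mul]
        have h1 : |(q:ℝ) - x| < (|A| / 4) / (|Φ 1| + 1) :=
          lt_of_lt_of_le (by rwa [abs_sub_comm] at hxq) (min_le_right _ _)
        have h2 : |Φ 1| < |Φ 1| + 1 := by linarith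
        calc |(q:ℝ) - x| * |Φ 1| ≤ ((|A| / 4) / (|Φ 1| + 1)) * (|Φ 1| + 1) := by
              apply mul_le_mul h1.le h2.le (abs_nonneg _) (by positivity)
          _ = |A| / 4 := by field_simp
      have : |A| = |Φ x - Φ 1 * x| := by rw [hA]
      calc |A| = |Φ (x - q) + ((q:ℝ) * Φ 1 - x * Φ 1)| := by
            rw [hA, ← e1, hrat q]; ring_nf
        _ ≤ |Φ (x - q)| + |(q:ℝ) * Φ 1 - x * Φ 1| := abs_add_le _ _
        _ ≤ |A| / 4 + |A| / 4 := add_le_add b1 b2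
        _ = |A| / 2 := by ring
    linarith
  refine ⟨Φ 1, fun x hx => ?_⟩
  rw [← hΦφ x hx, hlin x]


private lemma chop (h : ℝ → ℝ) (S : Set ℝ) (hS : S.OrdConnected) (s ε : ℝ) (hε : 0 < ε)
    (hloc : ∀ x ∈ S, ∀ y ∈ S, |x - y| < ε → h x - h y = s * (x - y)) :
    ∀ x ∈ S, ∀ y ∈ S, h x - h y = s * (x - y) := by
  -- first for y ≤ x
  have main : ∀ x ∈ S, ∀ y ∈ S, y ≤ x → h x - h y = s * (x - y) := by
    intro x hx y hy hyx
    obtain ⟨m, hm⟩ := exists_nat_gt ((x - y) / ε)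
    set N : ℕ := m + 1 with hN
    have hNgt : (x - y) / ε < N := by
      refine lt_of_lt_of_le hm ?_; exact_mod_cast Nat.le_succ m
    have hNpos : (0:ℝ) < N := by positivity
    set d : ℝ := (x - y) / N with hd
    have hd0 : 0 ≤ d := div_nonneg (by linarith) hNpos.le
    have hdε : d < ε := by
      rw [hd, div_lt_iff₀ hNpos]
      rw [div_lt_iff₀ hε] at hNgt
      linarith
    have hmem : ∀ k : ℕ, k ≤ N → y + k * d ∈ S := by
      intro k hk
      refine hS.out hy hx ⟨by nlinarith, ?_⟩
      have h1 : (k : ℝ) * d ≤ N * d := by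
        apply mul_le_mul_of_nonneg_right _ hd0; exact_mod_cast hk
      have h2 : (N : ℝ) * d = x - y := by
        rw [hd]; field_simp
      linarith
    have key : ∀ k : ℕ, k ≤ N → h (y + k * d) - h y = s * (k * d) := by
      intro k
      induction k with
      | zero => intro _; simp
      | succ k ih =>
        intro hk
        have hk' : k ≤ N := Nat.le_of_succ_le hk
        have ihk := ih hk'
        have step := hloc (y + (k + 1 : ℕ) * d) (hmem _ hk) (y + k * d) (hmem _ hk')
          (by push_cast; rw [show y + ((k:ℝ) + 1) * d - (y + k * d) = d by ring,
              abs_of_nonneg hd0]; exact hdε)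
        push_cast at step ⊢
        linarith
    have := key N le_rfl
    have h2 : y + (N : ℝ) * d = x := by rw [hd]; field_simp; ring
    rw [h2] at this
    rw [this, hd]; field_simp
  intro x hx y hy
  rcases le_total y x with hle | hle
  · exact main x hx y hy hle
  · have := main y hy x hx hle; linarith


private lemma core (f g : ℝ → ℝ) (D I : Set ℝ)
    (hDo : IsOpen D) (hDc : D.OrdConnected) (hIo : IsOpen I) (hIc : I.OrdConnected)
    (hDne : D.Nonempty) (hIne : I.Nonempty)
    (M : ℝ) (hf : ∀ x, |f x| ≤ M) (hg : ∀ x, |g x| ≤ M)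
    (H : ∀ u ∈ D, ∀ u' ∈ D, ∀ v ∈ I, ∀ v' ∈ I, u + v = u' + v' → f u + g v = f u' + g v') :
    ∃ s b b' : ℝ, (∀ u ∈ D, f u = s * u + b) ∧ (∀ v ∈ I, g v = s * v + b') := by
  obtain ⟨u0, hu0⟩ := hDne
  obtain ⟨v0, hv0⟩ := hIne
  obtain ⟨εD, hεD, hballD⟩ := Metric.isOpen_iff.mp hDo u0 hu0
  obtain ⟨εI, hεI, hballI⟩ := Metric.isOpen_iff.mp hIo v0 hv0
  set ε : ℝ := min εD εI / 2 with hε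
  have hεpos : 0 < ε := by positivity
  have hD2 : ∀ δ : ℝ, |δ| < 2 * ε → u0 - δ ∈ D := by
    intro δ hδ
    apply hballD
    rw [Metric.mem_ball, Real.dist_eq]
    have : 2 * ε ≤ εD := by
      rw [hε]; rcases min_le_left εD εI with h; linarith [min_le_left εD εI]
    calc |u0 - δ - u0| = |δ| := by rw [show u0 - δ - u0 = -δ by ring, abs_neg]
      _ < 2 * ε := hδ
      _ ≤ εD := this
  have hI2 : ∀ δ : ℝ, |δ| < 2 * ε → v0 + δ ∈ I := by
    intro δ hδ
    apply hballI
    rw [Metric.mem_ball, Real.dist_eq]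
    have : 2 * ε ≤ εI := by rw [hε]; linarith [min_le_right εD εI]
    calc |v0 + δ - v0| = |δ| := by rw [show v0 + δ - v0 = δ by ring]
      _ < 2 * ε := hδ
      _ ≤ εI := this
  -- key relation
  have hR : ∀ u ∈ D, ∀ v ∈ I, ∀ δ : ℝ, u - δ ∈ D → v + δ ∈ I →
      f (u - δ) + g (v + δ) = f u + g v := by
    intro u hu v hv δ hu' hv'
    exact H (u - δ) hu' u hu (v + δ) hv' v hv (by ring)
  set φ : ℝ → ℝ := fun δ => g (v0 + δ) - g v0 with hφdef
  have hφf : ∀ δ : ℝ, |δ| < 2 * ε → φ δ = f u0 - f (u0 - δ) := by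
    intro δ hδ
    have := hR u0 hu0 v0 hv0 δ (hD2 δ hδ) (hI2 δ hδ)
    simp only [hφdef]; linarith
  have hadd : ∀ x y : ℝ, |x| < ε → |y| < ε → φ (x + y) = φ x + φ y := by
    intro x y hx hy
    have hx2 : |x| < 2 * ε := by linarith
    have hy2 : |y| < 2 * ε := by linarith
    have hxy2 : |x + y| < 2 * ε := lt_of_le_of_lt (abs_add_le x y) (by linarith)
    have h1 := hR u0 hu0 (v0 + x) (hI2 x hx2) y (hD2 y hy2)
      (by rw [show v0 + x + y = v0 + (x + y) by ring]; exact hI2 _ hxy2)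
    have h2 := hφf y hy2
    simp only [hφdef] at *
    have e : v0 + x + y = v0 + (x + y) := by ring
    rw [e] at h1
    linarith
  have hbd : ∀ x : ℝ, |x| < ε → |φ x| ≤ 2 * M := by
    intro x _
    simp only [hφdef]
    calc |g (v0 + x) - g v0| ≤ |g (v0 + x)| + |g v0| := abs_sub _ _
      _ ≤ 2 * M := by linarith [hg (v0 + x), hg v0]
  obtain ⟨s, hs⟩ := phi_linear φ ε (2 * M) hεpos hadd hbd
  -- global increments
  have hIncG : ∀ w ∈ I, ∀ v ∈ I, |w - v| < ε → g w - g v = s * (w - v) := by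
    intro w hw v hv hwv
    set δ : ℝ := w - v with hδ
    have hδ2 : |δ| < 2 * ε := by rw [hδ]; linarith
    have h1 := hR u0 hu0 v hv δ (hD2 δ hδ2) (by rw [show v + δ = w by rw [hδ]; ring]; exact hw)
    have h2 := hφf δ hδ2
    have h3 := hs δ (by rw [hδ]; exact hwv)
    have e : v + δ = w := by rw [hδ]; ring
    rw [e] at h1
    linarith
  have hIncF : ∀ u ∈ D, ∀ w ∈ D, |u - w| < ε → f u - f w = s * (u - w) := by
    intro u hu w hw huw
    set δ : ℝ := u - w with hδ
    have hδ2 : |δ| < 2 * ε := by rw [hδ]; linarith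
    have h1 := hR u hu v0 hv0 δ (by rw [show u - δ = w by rw [hδ]; ring]; exact hw)
      (hI2 δ hδ2)
    have h2 : φ δ = s * δ := hs δ (by rw [hδ]; exact huw)
    simp only [hφdef] at h2
    have e : u - δ = w := by rw [hδ]; ring
    rw [e] at h1
    linarith
  have hgG := chop g I hIc s ε hεpos hIncG
  have hgF := chop f D hDc s ε hεpos hIncF
  refine ⟨s, f u0 - s * u0, g v0 - s * v0, fun u hu => ?_, fun v hv => ?_⟩
  · have := hgF u hu u0 hu0; linarith [this]; 
  · have := hgG v hv v0 hv0; linarith [this]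


private lemma tRel (θ : ℝ → ℝ) (D I : Set ℝ) (hD : Move.ValidDom D) (hI : Move.ValidDom I)
    (h : RespectsAll θ (tMoves (D ×ˢ I))) :
    ∀ u ∈ D, ∀ u' ∈ D, ∀ v ∈ I, ∀ v' ∈ I, v - u = v' - u' → θ v - θ u = θ v' - θ u' := by
  intro u hu u' hu' v hv v' hv' heq
  set p : ℝ := v - u with hp
  set E : Set ℝ := D ∩ (fun x => x + p) ⁻¹' I with hE
  have huE : u ∈ E := ⟨hu, by show u + p ∈ I; rw [hp, show u + (v - u) = v by ring]; exact hv⟩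
  have hu'E : u' ∈ E := by
    refine ⟨hu', ?_⟩
    show u' + p ∈ I
    have : u' + p = v' := by rw [hp]; linarith
    rw [this]; exact hv'
  set m : Move := ⟨false, p, E⟩ with hm
  have hmem : m ∈ tMoves (D ×ˢ I) := by
    refine ⟨rfl, ⟨⟨?_, ?_⟩, ?_⟩, ?_⟩
    · exact hD.1.inter (hI.1.preimage (continuous_id.add continuous_const))
    · constructor
      intro x hx y hy z hz
      exact ⟨hD.2.out hx.1 hy.1 hz, hI.2.out hx.2 hy.2 ⟨by simp; linarith [hz.1], by simp; linarith [hz.2]⟩⟩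
    · intro hemp
      exact absurd (hemp ▸ (huE : u ∈ m.dom)) (Set.notMem_empty u)
    · rintro ⟨a, b⟩ ⟨x, hx, hxab⟩
      have : a = x ∧ b = x + p := by
        simp [Move.eval, uEval] at hxab
        exact ⟨hxab.1.symm, hxab.2.symm⟩
      rw [Set.mem_prod]
      rw [this.1, this.2]
      exact ⟨hx.1, hx.2⟩
  obtain ⟨c, hc⟩ := h m hmem
  have h1 := hc u huE
  have h2 := hc u' hu'E
  simp [Move.eval, Move.chi, uEval] at h1 h2
  have e1 : u + p = v := by rw [hp]; ring
  have e2 : u' + p = v' := by rw [hp]; linarith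
  rw [e1] at h1; rw [e2] at h2
  linarith

private lemma rRel (θ : ℝ → ℝ) (D I : Set ℝ) (hD : Move.ValidDom D) (hI : Move.ValidDom I)
    (h : RespectsAll θ (rMoves (D ×ˢ I))) :
    ∀ u ∈ D, ∀ u' ∈ D, ∀ v ∈ I, ∀ v' ∈ I, u + v = u' + v' → θ u + θ v = θ u' + θ v' := by
  intro u hu u' hu' v hv v' hv' heq
  set p : ℝ := u + v with hp
  set E : Set ℝ := D ∩ (fun x => p - x) ⁻¹' I with hE
  have huE : u ∈ E := ⟨hu, by show p - u ∈ I; rw [hp]; convert hv using 2; ring⟩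
  have hu'E : u' ∈ E := by
    refine ⟨hu', ?_⟩
    show p - u' ∈ I
    have : p - u' = v' := by rw [hp]; linarith
    rw [this]; exact hv'
  set m : Move := ⟨true, p, E⟩ with hm
  have hmem : m ∈ rMoves (D ×ˢ I) := by
    refine ⟨rfl, ⟨⟨?_, ?_⟩, ?_⟩, ?_⟩
    · exact hD.1.inter (hI.1.preimage (continuous_const.sub continuous_id))
    · constructor
      intro x hx y hy z hz
      refine ⟨hD.2.out hx.1 hy.1 hz, hI.2.out hy.2 hx.2 ⟨by simp; linarith [hz.2], by simp; linarith [hz.1]⟩⟩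
    · intro hemp
      exact absurd (hemp ▸ (huE : u ∈ m.dom)) (Set.notMem_empty u)
    · rintro ⟨a, b⟩ ⟨x, hx, hxab⟩
      have : a = x ∧ b = p - x := by
        simp [Move.eval, uEval] at hxab
        exact ⟨hxab.1.symm, hxab.2.symm⟩
      rw [Set.mem_prod]
      rw [this.1, this.2]
      exact ⟨hx.1, hx.2⟩
  obtain ⟨c, hc⟩ := h m hmem
  have h1 := hc u huE
  have h2 := hc u' hu'E
  simp [hm, Move.eval, Move.chi, uEval] at h1 h2
  have e1 : p - u = v := by rw [hp]; ring
  have e2 : p - u' = v' := by rw [hp]; linarith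
  rw [e1] at h1; rw [e2] at h2
  linarith

private lemma affine_respects (θ : ℝ → ℝ) (D I : Set ℝ) (s b b' : ℝ)
    (hD : ∀ x ∈ D, θ x = s * x + b) (hI : ∀ x ∈ I, θ x = s * x + b') :
    RespectsAll θ (movesIn (D ×ˢ I)) := by
  rintro ⟨br, p, E⟩ ⟨_, hgr⟩
  have hmem : ∀ x ∈ E, x ∈ D ∧ uEval br p x ∈ I := by
    intro x hx
    have := hgr ⟨x, hx, rfl⟩
    rw [Set.mem_prod] at this
    exact this
  cases br
  · refine ⟨s * p + b' - b, fun x hx => ?_⟩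
    obtain ⟨hxD, hxI⟩ := hmem x hx
    simp [Move.eval, uEval] at hxI ⊢
    rw [hI _ hxI, hD _ hxD]
    simp [Move.chi]
    ring
  · refine ⟨s * p + b' + b, fun x hx => ?_⟩
    obtain ⟨hxD, hxI⟩ := hmem x hx
    simp [Move.eval, uEval] at hxI ⊢
    rw [hI _ hxI, hD _ hxD]
    simp [Move.chi]
    ring

/-- For a bounded function `θ` and nonempty open intervals `D`, `I`:
respecting the translation moves, the reflection moves, or all moves of
`D × I` is equivalent to `θ` being affine on `D` and `I` with one slope. -/
theorem interval_lemma_moves (θ : ℝ → ℝ) (hθ : ∃ M : ℝ, ∀ x, |θ x| ≤ M)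
    (D I : Set ℝ) (hD : Move.ValidDom D) (hDne : D.Nonempty)
    (hI : Move.ValidDom I) (hIne : I.Nonempty) :
    List.TFAE
      [RespectsAll θ (tMoves (D ×ˢ I)),
       RespectsAll θ (rMoves (D ×ˢ I)),
       RespectsAll θ (movesIn (D ×ˢ I)),
       ∃ s b b' : ℝ, (∀ x ∈ D, θ x = s * x + b) ∧ (∀ x ∈ I, θ x = s * x + b')] := by
  obtain ⟨M, hM⟩ := hθ
  tfae_have 3 → 1 := fun h m hm => h m ⟨hm.2.1, hm.2.2⟩
  tfae_have 3 → 2 := fun h m hm => h m ⟨hm.2.1, hm.2.2⟩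
  tfae_have 4 → 3 := by
    rintro ⟨s, b, b', h1, h2⟩
    exact affine_respects θ D I s b b' h1 h2
  tfae_have 2 → 4 := by
    intro h
    have R := rRel θ D I hD hI h
    obtain ⟨s, b, b', h1, h2⟩ := core θ θ D I hD.1 hD.2 hI.1 hI.2 hDne hIne M hM hM
      (fun u hu u' hu' v hv v' hv' heq => R u hu u' hu' v hv v' hv' heq)
    exact ⟨s, b, b', h1, h2⟩
  tfae_have 1 → 4 := by
    intro h
    have T := tRel θ D I hD hI h
    set D' : Set ℝ := (fun x => -x) ⁻¹' D with hD'
    have hD'o : IsOpen D' := hD.1.preimage continuous_neg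
    have hD'c : D'.OrdConnected := by
      constructor
      intro x hx y hy z hz
      show -z ∈ D
      exact hD.2.out hy hx ⟨by simp; linarith [hz.2], by simp; linarith [hz.1]⟩
    have hD'ne : D'.Nonempty := by
      obtain ⟨u0, hu0⟩ := hDne
      exact ⟨-u0, by show -(-u0) ∈ D; simpa using hu0⟩
    obtain ⟨s, b, b', h1, h2⟩ := core (fun x => -θ (-x)) θ D' I hD'o hD'c hI.1 hI.2
      hD'ne hIne M (fun x => by simpa using hM (-x)) hM
      (by
        intro u hu u' hu' v hv v' hv' heq
        have := T (-u) hu (-u') hu' v hv v' hv' (by linarith)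
        linarith)
    refine ⟨s, -b, b', fun x hx => ?_, h2⟩
    have hxD' : -x ∈ D' := by show -(-x) ∈ D; simpa using hx
    have := h1 (-x) hxD'
    simp at this
    linarith
  tfae_finish
end
end

section
/- Let θ : ℝ → ℝ be a bounded function that respects a move ensemble Ω, and let C ⊆ ℝ be an open set that is a connected covered component of Ω, i.e., moves(C × C) ⊆ Ω. Then there exists a common slope s ∈ ℝ such that θ is affine with slope s on every open interval contained in C. -/
open Filter Set

noncomputable section

private lemma eq_zero_of_abs_le_div (x c : ℝ) (hc : 0 ≤ c)
    (h : ∀ n : ℕ, 1 ≤ n → |x| ≤ c / n) : x = 0 := by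
  by_contra hx
  have hx' : 0 < |x| := abs_pos.mpr hx
  obtain ⟨n, hn⟩ := exists_nat_gt (c / |x|)
  have hn1 : 1 ≤ n := by
    by_contra h1
    push_neg at h1
    interval_cases n
    have : 0 ≤ c / |x| := div_nonneg hc hx'.le
    simp at hn
    linarith
  have h2 := h n hn1
  have hnpos : (0:ℝ) < n := by exact_mod_cast hn1
  have h3 : c < n * |x| := by rwa [div_lt_iff₀ hx'] at hn
  have h4 : c / n < |x| := by rw [div_lt_iff₀ hnpos]; nlinarith
  linarith

set_option maxHeartbeats 1000000 in
private lemma lin_of_interval_add (F : ℝ → ℝ) (ε M : ℝ) (hε : 0 < ε)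
    (hadd : ∀ t u, |t| < ε → |u| < ε → |t + u| < ε → F (t + u) = F t + F u)
    (hbd : ∀ t, |t| < ε → |F t| ≤ M) :
    ∃ s, ∀ t, |t| < ε → F t = s * t := by
  have h0ε : |(0:ℝ)| < ε := by simpa using hε
  have hM : 0 ≤ M := le_trans (abs_nonneg _) (hbd 0 h0ε)
  have hF0 : F 0 = 0 := by
    have := hadd 0 0 h0ε h0ε (by simpa using hε)
    simp at this
    linarith
  have hneg : ∀ t, |t| < ε → F (-t) = - F t := by
    intro t ht
    have h' : |(-t)| < ε := by rwa [abs_neg]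
    have h2 := hadd t (-t) ht h' (by simpa using hε)
    simp at h2
    rw [hF0] at h2
    linarith
  have hmul : ∀ (n : ℕ) (t : ℝ), |(n:ℝ) * t| < ε → F ((n:ℝ) * t) = n * F t := by
    intro n
    induction n with
    | zero => intro t _; simpa using hF0
    | succ n ih =>
      intro t ht
      push_cast at ht ⊢
      have hcast : |((n:ℝ)+1)| = (n:ℝ)+1 := abs_of_nonneg (by positivity)
      have habs1 : |t| < ε := by
        have : |t| ≤ |((n:ℝ)+1) * t| := by
          rw [abs_mul, hcast]; nlinarith [abs_nonneg t]
        linarith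
      have habs2 : |(n:ℝ) * t| < ε := by
        have : |(n:ℝ) * t| ≤ |((n:ℝ)+1) * t| := by
          rw [abs_mul, abs_mul, hcast, Nat.abs_cast]
          nlinarith [abs_nonneg t]
        linarith
      have e : ((n:ℝ)+1) * t = (n:ℝ) * t + t := by ring
      rw [e, hadd _ t habs2 habs1 (by rw [← e]; exact ht), ih t habs2]
      ring
  set a := ε / 2 with ha
  have hapos : 0 < a := by positivity
  have haε : |a| < ε := by rw [abs_of_pos hapos]; linarith
  refine ⟨F a / a, ?_⟩
  have hposcase : ∀ t, 0 < t → t < ε → F t = F a / a * t := by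
    intro t ht0 htε
    have key : ∀ n : ℕ, 1 ≤ n → |F t - t / a * F a| ≤ (2 * M) / n := by
      intro n hn
      have hnR : (0:ℝ) < n := by exact_mod_cast hn
      set m : ℕ := ⌊t * n / a⌋₊ with hm
      have hx0 : 0 ≤ t * n / a := by positivity
      have hm1 : (m:ℝ) ≤ t * n / a := Nat.floor_le hx0
      have hm2 : t * n / a < m + 1 := Nat.lt_floor_add_one _
      have hm1' : (m:ℝ) * a ≤ t * n := by
        have := (le_div_iff₀ hapos).mp hm1; linarith
      have hm2' : t * n < ((m:ℝ) + 1) * a := by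
        have := (div_lt_iff₀ hapos).mp hm2; linarith
      set r : ℝ := t - (m:ℝ) * (a / n) with hr
      have hp_le : (m:ℝ) * (a / n) ≤ t := by
        rw [mul_div_assoc']
        exact (div_le_iff₀ hnR).mpr hm1'
      have hr0 : 0 ≤ r := by rw [hr]; linarith
      have hr1 : r < a / n := by
        have h5 : t < ((m:ℝ) + 1) * (a / n) := by
          rw [mul_div_assoc']
          exact (lt_div_iff₀ hnR).mpr hm2'
        have h6 : ((m:ℝ) + 1) * (a / n) = (m:ℝ) * (a / n) + a / n := by ring
        rw [hr]; linarith [h6 ▸ h5]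
      have hp_nonneg : 0 ≤ (m:ℝ) * (a / n) := by positivity
      have hp_lt : |(m:ℝ) * (a / n)| < ε := by
        rw [abs_of_nonneg hp_nonneg]; linarith
      have hanε : a / n < ε := by
        have hn1R : (1:ℝ) ≤ n := by exact_mod_cast hn
        have : a / n ≤ a := by
          rw [div_le_iff₀ hnR]
          nlinarith [mul_le_mul_of_nonneg_left hn1R hapos.le]
        linarith
      have hrε : |r| < ε := by rw [abs_of_nonneg hr0]; exact lt_trans hr1 hanε
      -- F t = F (m*(a/n)) + F r
      have hsplit : F t = F ((m:ℝ) * (a / n)) + F r := by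
        have e : t = (m:ℝ) * (a / n) + r := by rw [hr]; ring
        rw [e] at htε ht0 ⊢
        exact hadd _ _ hp_lt hrε (by rw [abs_of_pos (by linarith : (0:ℝ) < (m:ℝ)*(a/n)+r)]; linarith)
      have hFp : F ((m:ℝ) * (a / n)) = m * F (a / n) := hmul m (a / n) hp_lt
      have hFa : F a = n * F (a / n) := by
        have e : (n:ℝ) * (a / n) = a := by field_simp
        have := hmul n (a / n) (by rw [e]; exact haε)
        rw [e] at this; exact this
      have hFan : F (a / n) = F a / n := by
        rw [hFa]; field_simp
      have hFr : |F r| ≤ M / n := by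
        have hnr : |(n:ℝ) * r| < ε := by
          rw [abs_of_nonneg (by positivity)]
          have : (n:ℝ) * r < (n:ℝ) * (a / n) := by
            exact (mul_lt_mul_iff_right₀ hnR).mpr hr1
          rw [mul_div_assoc'] at this
          have e2 : (n:ℝ) * a / n = a := by field_simp
          rw [e2] at this
          linarith
        have := hmul n r hnr
        have hb := hbd _ hnr
        rw [this, abs_mul, Nat.abs_cast] at hb
        rw [le_div_iff₀ hnR]
        nlinarith [abs_nonneg (F r)]
      have hmn : |t / a - (m:ℝ) / n| ≤ 1 / n := by
        have h7 : (m:ℝ) / n ≤ t / a := by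
          rw [div_le_div_iff₀ hnR hapos]; linarith
        have h8 : t / a < ((m:ℝ) + 1) / n := (div_lt_div_iff₀ hapos hnR).mpr hm2'
        have h9 : ((m:ℝ) + 1) / n = (m:ℝ) / n + 1 / n := by ring
        rw [abs_of_nonneg (by linarith [h7])]
        linarith [h9 ▸ h8]
      have hFabd : |F a| ≤ M := hbd a haε
      have efinal : F t - t / a * F a = ((m:ℝ) / n - t / a) * F a + F r := by
        rw [hsplit, hFp, hFan]
        field_simp
        ring
      rw [efinal]
      calc |((m:ℝ) / n - t / a) * F a + F r| ≤ |((m:ℝ) / n - t / a) * F a| + |F r| :=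
            abs_add_le _ _
        _ ≤ |(m:ℝ) / n - t / a| * |F a| + M / n := by
            rw [abs_mul]; gcongr
        _ ≤ (1 / n) * M + M / n := by
            have : |(m:ℝ) / n - t / a| ≤ 1 / n := by rwa [abs_sub_comm]
            gcongr
        _ = (2 * M) / n := by ring
    have := eq_zero_of_abs_le_div (F t - t / a * F a) (2 * M) (by linarith) key
    have e : t / a * F a = F a / a * t := by ring
    linarith [this, e]
  intro t ht
  rcases lt_trichotomy t 0 with h | h | h
  · have hu : 0 < -t := by linarith
    have huε : -t < ε := by rw [abs_lt] at ht; linarith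
    have h1 := hposcase (-t) hu huε
    have h2 := hneg (-t) (by rw [abs_neg]; exact ht)
    rw [neg_neg] at h2
    rw [h2, h1]; ring
  · rw [h, hF0]; ring
  · exact hposcase t h (by rw [abs_lt] at ht; linarith)

set_option maxHeartbeats 1000000 in
private lemma affine_on_aux (θ : ℝ → ℝ) (M : ℝ) (hθ : ∀ x, |θ x| ≤ M)
    (U : Set ℝ) (hUo : IsOpen U) (hUoc : U.OrdConnected)
    (hA : ∀ t x y, x ∈ U → x + t ∈ U → y ∈ U → y + t ∈ U →
      θ (x + t) - θ x = θ (y + t) - θ y)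
    (x₀ : ℝ) (hx₀ : x₀ ∈ U) :
    ∃ s, ∀ x ∈ U, ∀ y ∈ U, θ y - θ x = s * (y - x) := by
  obtain ⟨ε, hε, hball⟩ := Metric.isOpen_iff.mp hUo x₀ hx₀
  have hU' : ∀ z : ℝ, |z - x₀| < ε → z ∈ U := fun z hz =>
    hball (by rwa [Metric.mem_ball, Real.dist_eq])
  have hmemF : ∀ t, |t| < ε → x₀ + t ∈ U := fun t ht => hU' _ (by simpa using ht)
  have hadd : ∀ t u, |t| < ε → |u| < ε → |t + u| < ε →
      (θ (x₀ + (t + u)) - θ x₀) = (θ (x₀ + t) - θ x₀) + (θ (x₀ + u) - θ x₀) := by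
    intro t u ht hu htu
    have h1 := hA u (x₀ + t) x₀ (hmemF t ht)
      (by rw [add_assoc]; exact hmemF _ htu) hx₀ (hmemF u hu)
    have e : x₀ + t + u = x₀ + (t + u) := by ring
    rw [e] at h1
    linarith
  have hbd : ∀ t, |t| < ε → |θ (x₀ + t) - θ x₀| ≤ 2 * M := by
    intro t _
    have h1 := abs_add_le (θ (x₀ + t)) (-θ x₀)
    rw [abs_neg] at h1
    have := hθ (x₀ + t); have := hθ x₀
    calc |θ (x₀ + t) - θ x₀| = |θ (x₀ + t) + -θ x₀| := by ring_nf
      _ ≤ |θ (x₀ + t)| + |θ x₀| := h1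
      _ ≤ 2 * M := by linarith
  obtain ⟨s, hs⟩ := lin_of_interval_add (fun t => θ (x₀ + t) - θ x₀) ε (2 * M) hε hadd hbd
  refine ⟨s, ?_⟩
  intro x hx y hy
  obtain ⟨n, hn⟩ := exists_nat_gt (|y - x| / ε)
  have hn0 : 0 < n := by
    have h0 : 0 ≤ |y - x| / ε := by positivity
    exact_mod_cast lt_of_le_of_lt h0 hn
  have hnR : (0:ℝ) < n := by exact_mod_cast hn0
  set δ : ℝ := (y - x) / n with hδ
  have hδε : |δ| < ε := by
    rw [hδ, abs_div, Nat.abs_cast, div_lt_iff₀ hnR]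
    rw [div_lt_iff₀ hε] at hn
    linarith
  have hyx : x + (n:ℝ) * δ = y := by rw [hδ]; field_simp; ring
  have hnδ : (n:ℝ) * δ = y - x := by linarith
  have hmem : ∀ k : ℕ, k ≤ n → x + (k:ℝ) * δ ∈ U := by
    intro k hk
    have hkn : (k:ℝ) ≤ n := Nat.cast_le.mpr hk
    have hk0 : (0:ℝ) ≤ k := Nat.cast_nonneg k
    rcases le_total x y with hxy | hxy
    · have hδ0 : 0 ≤ δ := by rw [hδ]; exact div_nonneg (by linarith) hnR.le
      exact hUoc.out hx hy ⟨by nlinarith, by nlinarith⟩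
    · have hδ0 : δ ≤ 0 := by
        rw [hδ]; exact div_nonpos_of_nonpos_of_nonneg (by linarith) hnR.le
      exact hUoc.out hy hx ⟨by nlinarith, by nlinarith⟩
  have hstep : ∀ k : ℕ, k ≤ n → θ (x + (k:ℝ) * δ) - θ x = (k:ℝ) * (s * δ) := by
    intro k
    induction k with
    | zero => intro _; simp
    | succ k ih =>
      intro hk
      have hk' : k ≤ n := Nat.le_of_succ_le hk
      have hmem1 : x + (k:ℝ) * δ ∈ U := hmem k hk'
      have hmem2 : x + (k:ℝ) * δ + δ ∈ U := by
        have e : x + (k:ℝ) * δ + δ = x + ((k:ℕ)+1 : ℕ) * δ := by push_cast; ring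
        rw [e]; exact hmem (k+1) hk
      have h1 := hA δ (x + (k:ℝ) * δ) x₀ hmem1 hmem2 hx₀ (hmemF δ hδε)
      have h2 : θ (x₀ + δ) - θ x₀ = s * δ := hs δ hδε
      have h3 := ih hk'
      push_cast
      have e : x + ((k:ℝ) + 1) * δ = x + (k:ℝ) * δ + δ := by ring
      rw [e]
      linarith
  have hfin := hstep n le_rfl
  rw [hyx] at hfin
  rw [show (n:ℝ) * (s * δ) = s * ((n:ℝ) * δ) from by ring, hnδ] at hfin
  exact hfin

/-- A bounded function respecting a move ensemble is affine with one common
slope on every open interval of a connected covered component. -/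
theorem affine_on_connected_covered_component (θ : ℝ → ℝ)
    (hθ : ∃ M : ℝ, ∀ x, |θ x| ≤ M)
    (Ω : Set Move) (hΩ : IsMoveEnsemble Ω) (hresp : RespectsAll θ Ω)
    (C : Set ℝ) (hCopen : IsOpen C) (hcov : movesIn (C ×ˢ C) ⊆ Ω) :
    ∃ s : ℝ, ∀ D : Set ℝ, D ⊆ C → Move.ValidDom D →
      ∃ b : ℝ, ∀ x ∈ D, θ x = s * x + b := by
  obtain ⟨M, hM⟩ := hθ
  -- Key: any translation move inside C × C is respected by θ.
  have hkey : ∀ (t : ℝ) (E : Set ℝ), IsOpen E → E.OrdConnected → E.Nonempty →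
      E ⊆ C → (∀ z ∈ E, z + t ∈ C) → ∃ c, ∀ z ∈ E, θ (z + t) = θ z + c := by
    intro t E hEo hEoc hEne hEC himg
    set m : Move := ⟨false, t, E⟩ with hm
    have hmval : m.Valid := ⟨⟨hEo, hEoc⟩, fun h => absurd h hEne.ne_empty⟩
    have hmgr : m.graph ⊆ C ×ˢ C := by
      rintro p ⟨z, hz, rfl⟩
      have he : m.eval z = z + t := by simp [hm, Move.eval, uEval]
      show (z, m.eval z) ∈ C ×ˢ C
      rw [he]
      exact Set.mem_prod.mpr ⟨hEC hz, himg z hz⟩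
    obtain ⟨c, hc⟩ := hresp m (hcov ⟨hmval, hmgr⟩)
    refine ⟨c, fun z hz => ?_⟩
    have := hc z hz
    simpa [hm, Move.eval, Move.chi, uEval] using this
  -- Uniform increments on any open OrdConnected subset of C.
  have hAgen : ∀ U : Set ℝ, IsOpen U → U.OrdConnected → U ⊆ C →
      ∀ t x y, x ∈ U → x + t ∈ U → y ∈ U → y + t ∈ U →
        θ (x + t) - θ x = θ (y + t) - θ y := by
    intro U hUo hUoc hUC t x y hx hxt hy hyt
    set E : Set ℝ := U ∩ (fun z => z + t) ⁻¹' U with hE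
    have hEo : IsOpen E := hUo.inter ((continuous_add_right t).isOpen_preimage U hUo)
    have hEoc : E.OrdConnected :=
      hUoc.inter ⟨fun a ha b hb z hz =>
        hUoc.out ha hb ⟨(show a + t ≤ z + t by linarith [hz.1]), (show z + t ≤ b + t by linarith [hz.2])⟩⟩
    have hEne : E.Nonempty := ⟨x, hx, hxt⟩
    have hEC : E ⊆ C := fun z hz => hUC hz.1
    have himg : ∀ z ∈ E, z + t ∈ C := fun z hz => hUC hz.2
    obtain ⟨c, hc⟩ := hkey t E hEo hEoc hEne hEC himg
    have h1 := hc x ⟨hx, hxt⟩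
    have h2 := hc y ⟨hy, hyt⟩
    rw [h1, h2]; ring
  by_cases hCne : C.Nonempty
  · obtain ⟨x₀, hx₀⟩ := hCne
    obtain ⟨ε₀, hε₀, hball₀⟩ := Metric.isOpen_iff.mp hCopen x₀ hx₀
    set U₀ : Set ℝ := Metric.ball x₀ ε₀ with hU₀
    have hU₀mem : ∀ z : ℝ, |z - x₀| < ε₀ → z ∈ U₀ := fun z hz => by
      rwa [hU₀, Metric.mem_ball, Real.dist_eq]
    have hU₀o : IsOpen U₀ := Metric.isOpen_ball
    have hU₀oc : U₀.OrdConnected := by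
      rw [hU₀, Real.ball_eq_Ioo]; exact Set.ordConnected_Ioo
    have hU₀C : U₀ ⊆ C := hball₀
    have hx₀U : x₀ ∈ U₀ := Metric.mem_ball_self hε₀
    obtain ⟨s₀, hs₀⟩ := affine_on_aux θ M hM U₀ hU₀o hU₀oc
      (hAgen U₀ hU₀o hU₀oc hU₀C) x₀ hx₀U
    refine ⟨s₀, ?_⟩
    intro D hDC hDval
    rcases D.eq_empty_or_nonempty with hDe | ⟨xd, hxd⟩
    · exact ⟨0, fun x hx => absurd hx (by rw [hDe]; exact Set.notMem_empty x)⟩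
    · obtain ⟨sD, hsD⟩ := affine_on_aux θ M hM D hDval.1 hDval.2
        (hAgen D hDval.1 hDval.2 hDC) xd hxd
      -- show sD = s₀ via a translation from around xd to around x₀
      obtain ⟨δ₁, hδ₁, hball₁⟩ := Metric.isOpen_iff.mp hDval.1 xd hxd
      set t : ℝ := x₀ - xd with ht
      set δ : ℝ := min δ₁ ε₀ with hδdef
      have hδpos : 0 < δ := lt_min hδ₁ hε₀
      have hδδ₁ : δ ≤ δ₁ := min_le_left _ _
      have hδε₀ : δ ≤ ε₀ := min_le_right _ _
      set E : Set ℝ := Set.Ioo (xd - δ) (xd + δ) with hEdef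
      have hED : E ⊆ D := by
        intro z hz
        obtain ⟨h1, h2⟩ := hz
        apply hball₁
        rw [Metric.mem_ball, Real.dist_eq, abs_lt]
        constructor <;> linarith
      have hEU₀ : ∀ z ∈ E, z + t ∈ U₀ := by
        intro z hz
        obtain ⟨h1, h2⟩ := hz
        apply hU₀mem
        rw [ht, abs_lt]
        constructor <;> linarith
      have hz1 : xd ∈ E := ⟨by linarith, by linarith⟩
      have hz2 : xd + δ / 2 ∈ E := ⟨by linarith, by linarith⟩
      obtain ⟨c, hc⟩ := hkey t E isOpen_Ioo Set.ordConnected_Ioo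
        ⟨xd, hz1⟩ (fun z hz => hDC (hED hz)) (fun z hz => hU₀C (hEU₀ z hz))
      have h1 := hsD xd hxd (xd + δ / 2) (hED hz2)
      rw [show xd + δ / 2 - xd = δ / 2 from by ring] at h1
      have h2 := hs₀ (xd + t) (hEU₀ xd hz1) (xd + δ / 2 + t) (hEU₀ _ hz2)
      rw [show xd + δ / 2 + t - (xd + t) = δ / 2 from by ring] at h2
      have h3 := hc xd hz1
      have h4 := hc (xd + δ / 2) hz2
      have h5 : sD * (δ / 2) = s₀ * (δ / 2) := by linarith
      have hsDs₀ : sD = s₀ :=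
        mul_right_cancel₀ (by positivity : (0:ℝ) < δ / 2).ne' h5
      refine ⟨θ xd - s₀ * xd, fun x hx => ?_⟩
      have h6 := hsD xd hxd x hx
      rw [hsDs₀] at h6
      have e : s₀ * (x - xd) = s₀ * x - s₀ * xd := by ring
      linarith [h6, e]
  · refine ⟨0, fun D hDC _ => ⟨0, fun x hx => absurd ⟨x, hDC hx⟩ hCne⟩⟩
end
end
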